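/- arXiv:1711.01653 — 2 statements merged into one kernel-verified Lean document; each statement's English description precedes it below -/
import Mathlib

section
/- Let B be a simple Bratteli diagram with full group G=G_B and path space X=X_B. For any clopen sets A,C⊆X with A∪C≠X, one has F(A∩C)=F(A)∩F(C). -/
open MeasureTheory Filter
open scoped ENNReal ComplexOrder

noncomputable section

/-- A Bratteli diagram: vertex levels `V i`, edge levels `E i` (edges from `V i` to `V (i+1)`),
all levels finite and nonempty, a single root vertex, and source/range maps that are
surjective (every vertex emits and receives an edge). -/
structure BratteliDiagram where
  V : ℕ → Type
  E : ℕ → Type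
  fintypeV : ∀ i, Fintype (V i)
  fintypeE : ∀ i, Fintype (E i)
  nonemptyV : ∀ i, Nonempty (V i)
  nonemptyE : ∀ i, Nonempty (E i)
  subsingleton_root : Subsingleton (V 0)
  src : ∀ i, E i → V i
  rng : ∀ i, E i → V (i + 1)
  src_surj : ∀ i, Function.Surjective (src i)
  rng_surj : ∀ i, Function.Surjective (rng i)

namespace BratteliDiagram

variable (B : BratteliDiagram)

/-- The path space `X_B`: infinite paths starting at the root. -/
def Path : Type :=
  { x : ∀ i, B.E i // ∀ i, B.rng i (x i) = B.src (i + 1) (x (i + 1)) }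

instance (i : ℕ) : UniformSpace (B.E i) := ⊥

instance instUniformSpacePath : UniformSpace B.Path :=
  inferInstanceAs (UniformSpace { x : ∀ i, B.E i // ∀ i, B.rng i (x i) = B.src (i + 1) (x (i + 1)) })

instance instMeasurableSpacePath : MeasurableSpace B.Path := borel _

/-- Finite segments of `L+1` consecutive edges starting at level `n`. -/
def Seg (n L : ℕ) : Type :=
  { f : ∀ i : Fin (L + 1), B.E (n + (i : ℕ)) //
    ∀ (i : ℕ) (hi : i < L),
      B.rng (n + i) (f ⟨i, by omega⟩) = B.src (n + (i + 1)) (f ⟨i + 1, by omega⟩) }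

/-- The number of finite paths connecting `v ∈ V n` to `w ∈ V (n + L + 1)`. -/
def numPaths (n L : ℕ) (v : B.V n) (w : B.V (n + L + 1)) : ℕ :=
  Nat.card { f : B.Seg n L //
    B.src n (f.1 ⟨0, by omega⟩) = v ∧ B.rng (n + L) (f.1 ⟨L, by omega⟩) = w }

/-- A Bratteli diagram is simple if every vertex of a given level is connected
to every vertex of some deeper level. -/
def IsSimple : Prop :=
  ∀ n : ℕ, ∃ L : ℕ, ∀ (v : B.V n) (w : B.V (n + L + 1)), 0 < B.numPaths n L v w

/-- A Bratteli diagram is even if every vertex of a given level is connected to every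
vertex of some deeper level by a (positive) even number of paths. -/
def IsEven : Prop :=
  ∀ n : ℕ, ∃ L : ℕ, ∀ (v : B.V n) (w : B.V (n + L + 1)),
    0 < B.numPaths n L v w ∧ Even (B.numPaths n L v w)

/-- A permutation of the path space "of level `n`": it changes only the first `n` edges,
and what it does to the first `n` edges depends only on the first `n` edges. -/
def IsLevel (n : ℕ) (g : Equiv.Perm B.Path) : Prop :=
  (∀ (x : B.Path) (i : ℕ), n ≤ i → (g x).1 i = x.1 i) ∧
  (∀ x y : B.Path, (∀ i : ℕ, i < n → x.1 i = y.1 i) → ∀ i : ℕ, i < n → (g x).1 i = (g y).1 i)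

theorem isLevel_one (n : ℕ) : B.IsLevel n 1 :=
  ⟨fun _ _ _ => rfl, fun _ _ h i hi => h i hi⟩

theorem IsLevel.mul {n : ℕ} {a b : Equiv.Perm B.Path} (ha : B.IsLevel n a)
    (hb : B.IsLevel n b) : B.IsLevel n (a * b) := by
  constructor
  · intro x i hi
    have h1 := ha.1 (b x) i hi
    have h2 := hb.1 x i hi
    simpa [Equiv.Perm.mul_apply] using h1.trans h2
  · intro x y hxy i hi
    have h2 := hb.2 x y hxy
    have := ha.2 (b x) (b y) h2 i hi
    simpa [Equiv.Perm.mul_apply] using this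

theorem IsLevel.mono {n m : ℕ} (hnm : n ≤ m) {g : Equiv.Perm B.Path}
    (h : B.IsLevel n g) : B.IsLevel m g := by
  refine ⟨fun x i hi => h.1 x i (hnm.trans hi), fun x y hxy i hi => ?_⟩
  rcases lt_or_ge i n with h' | h'
  · exact h.2 x y (fun j hj => hxy j (hj.trans_le hnm)) i h'
  · rw [h.1 x i h', h.1 y i h']
    exact hxy i hi

/-- The group `G_n` of homeomorphisms of the path space permuting only the
first `n` edges of infinite paths. -/
def level (n : ℕ) : Subgroup (Equiv.Perm B.Path) where
  carrier := { g | B.IsLevel n g ∧ B.IsLevel n g⁻¹ }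
  one_mem' := ⟨B.isLevel_one n, by simpa using B.isLevel_one n⟩
  mul_mem' := by
    intro a b ha hb
    exact ⟨ha.1.mul B hb.1, by rw [mul_inv_rev]; exact IsLevel.mul B hb.2 ha.2⟩
  inv_mem' := by
    intro a ha
    exact ⟨ha.2, by simpa using ha.1⟩

theorem level_mono {n m : ℕ} (h : n ≤ m) : B.level n ≤ B.level m := by
  intro g hg
  exact ⟨hg.1.mono B h, hg.2.mono B h⟩

/-- The full group `G_B = ⋃ n, G_n` of the Bratteli diagram. -/
def fullGroup : Subgroup (Equiv.Perm B.Path) where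
  carrier := { g | ∃ n, g ∈ B.level n }
  one_mem' := ⟨0, one_mem _⟩
  mul_mem' := by
    rintro a b ⟨n, ha⟩ ⟨m, hb⟩
    exact ⟨max n m, mul_mem (B.level_mono (le_max_left n m) ha)
      (B.level_mono (le_max_right n m) hb)⟩
  inv_mem' := by
    rintro a ⟨n, ha⟩
    exact ⟨n, inv_mem ha⟩

/-- `G_n` viewed as a subgroup of the full group. -/
def levelIn (n : ℕ) : Subgroup ↥B.fullGroup := (B.level n).comap B.fullGroup.subtype

/-- The subgroup `G°(A)` of elements of the full group fixing `A` pointwise. -/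
def Gcirc (A : Set B.Path) : Subgroup ↥B.fullGroup :=
  ⨅ x ∈ A, MulAction.stabilizer ↥B.fullGroup x

/-- `G°_n(A) = G_n ∩ G°(A)`. -/
def GcircN (n : ℕ) (A : Set B.Path) : Subgroup ↥B.fullGroup :=
  B.levelIn n ⊓ B.Gcirc A

end BratteliDiagram

/-- Conjugation of a subgroup: `g • H = gHg⁻¹`. -/
def conjSub {Γ : Type*} [Group Γ] (g : Γ) (H : Subgroup Γ) : Subgroup Γ :=
  Subgroup.map (MulAut.conj g).toMonoidHom H

/-- The Borel structure on the space `Sub(Γ)` of subgroups of `Γ`,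
induced from the product space `{0,1}^Γ` (equivalently `Set Γ`). -/
instance subgroupMeasurableSpace {Γ : Type*} [Group Γ] : MeasurableSpace (Subgroup Γ) :=
  MeasurableSpace.comap (fun H => (H : Set Γ)) inferInstance

namespace BratteliDiagram

variable (B : BratteliDiagram)

/-- `F(A)`: the collection of subgroups of the full group normalized by `G°(A)`. -/
def FF (A : Set B.Path) : Set (Subgroup ↥B.fullGroup) :=
  { H | ∀ g ∈ B.Gcirc A, conjSub g H = H }

end BratteliDiagram

/-- A measure `ν` on `Y` is invariant under the action of `G`. -/
def MeasInv (G : Type*) [Group G] {Y : Type*} [MeasurableSpace Y] [MulAction G Y]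
    (ν : Measure Y) : Prop :=
  ∀ (g : G) (s : Set Y), MeasurableSet s → ν ((fun y => g • y) ⁻¹' s) = ν s

/-- The action of `G` on `(Y, ν)` is ergodic: every invariant measurable set is null or conull. -/
def MeasErg (G : Type*) [Group G] {Y : Type*} [MeasurableSpace Y] [MulAction G Y]
    (ν : Measure Y) : Prop :=
  ∀ s : Set Y, MeasurableSet s → (∀ g : G, (fun y => g • y) ⁻¹' s = s) → ν s = 0 ∨ ν s = 1

/-- An invariant random subgroup: a conjugation-invariant Borel probability measure on `Sub(G)`. -/
def IsIRS (G : Type*) [Group G] (φ : Measure (Subgroup G)) : Prop :=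
  IsProbabilityMeasure φ ∧
    ∀ (g : G) (s : Set (Subgroup G)), MeasurableSet s → φ (conjSub g ⁻¹' s) = φ s

/-- An ergodic invariant random subgroup. -/
def IsErgodicIRS (G : Type*) [Group G] (φ : Measure (Subgroup G)) : Prop :=
  IsIRS G φ ∧
    ∀ s : Set (Subgroup G), MeasurableSet s → (∀ g : G, conjSub g ⁻¹' s = s) →
      φ s = 0 ∨ φ s = 1

/-- A character of a group: normalized, central, positive semidefinite complex function. -/
def IsCharacter (G : Type*) [Group G] (χ : G → ℂ) : Prop :=
  χ 1 = 1 ∧ (∀ a b : G, χ (a * b) = χ (b * a)) ∧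
    ∀ (n : ℕ) (g : Fin n → G) (c : Fin n → ℂ),
      0 ≤ ∑ i, ∑ j, (starRingEnd ℂ) (c i) * c j * χ (g i * (g j)⁻¹)

namespace BratteliDiagram

variable (B : BratteliDiagram)

/-- The product measure `μ_α = μ_1^{α_1} × ⋯ × μ_k^{α_k}` on `X^{|α|}`,
realized on the index type `Σ i : Fin k, Fin (α i)` (of cardinality `|α| = Σ α i`). -/
def prodMeasure {k : ℕ} (μ : Fin k → Measure B.Path) (α : Fin k → ℕ) :
    Measure ((Σ i : Fin k, Fin (α i)) → B.Path) :=
  Measure.pi fun p => μ p.1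

/-- The stabilizer distribution `φ_α` of the diagonal action of the full group
on `(X^{|α|}, μ_α)`. -/
def stabDist {k : ℕ} (μ : Fin k → Measure B.Path) (α : Fin k → ℕ) :
    Measure (Subgroup ↥B.fullGroup) :=
  Measure.map (fun y => MulAction.stabilizer ↥B.fullGroup y) (B.prodMeasure μ α)

end BratteliDiagram


/-! ### Auxiliary development for Statement 5 -/

namespace BratteliDiagram

variable (B : BratteliDiagram)

instance instFintypeE (i : ℕ) : Fintype (B.E i) := B.fintypeE i

instance instFiniteE (i : ℕ) : Finite (B.E i) := Finite.of_fintype _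

instance instDiscreteE (i : ℕ) : DiscreteTopology (B.E i) := by
  constructor; rfl

instance instCompactPath : CompactSpace B.Path := by
  have hcl : IsClosed {x : ∀ i, B.E i | ∀ i, B.rng i (x i) = B.src (i + 1) (x (i + 1))} := by
    have : {x : ∀ i, B.E i | ∀ i, B.rng i (x i) = B.src (i + 1) (x (i + 1))} =
        ⋂ i : ℕ, (fun x : ∀ j, B.E j => (x i, x (i + 1))) ⁻¹'
          {p : B.E i × B.E (i + 1) | B.rng i p.1 = B.src (i + 1) p.2} := by
      ext x; simp [Set.mem_iInter]
    rw [this]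
    exact isClosed_iInter fun i =>
      (isClosed_discrete _).preimage ((continuous_apply i).prodMk (continuous_apply (i + 1)))
  exact isCompact_iff_compactSpace.mp hcl.isCompact

/-- Two paths have the same prefix of length `n`. -/
def samePrefix (n : ℕ) (x p : B.Path) : Prop := ∀ i, i < n → x.1 i = p.1 i

theorem samePrefix_refl (n : ℕ) (x : B.Path) : B.samePrefix n x x := fun _ _ => rfl

theorem samePrefix_symm {n : ℕ} {x y : B.Path} (h : B.samePrefix n x y) :
    B.samePrefix n y x := fun i hi => (h i hi).symm

theorem samePrefix_trans {n : ℕ} {x y z : B.Path} (h : B.samePrefix n x y)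
    (h' : B.samePrefix n y z) : B.samePrefix n x z := fun i hi => (h i hi).trans (h' i hi)

theorem isOpen_cyl (n : ℕ) (x : B.Path) : IsOpen {y : B.Path | B.samePrefix n y x} := by
  have : {y : B.Path | B.samePrefix n y x} =
      Subtype.val ⁻¹' (⋂ i : Fin n, (fun f : ∀ j, B.E j => f i) ⁻¹' {x.1 i}) := by
    ext y
    show B.samePrefix n y x ↔ y.1 ∈ ⋂ i : Fin n, (fun f : ∀ j, B.E j => f i) ⁻¹' {x.1 i}
    simp only [Set.mem_preimage, Set.mem_iInter, Set.mem_singleton_iff]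
    exact ⟨fun h i => h i i.2, fun h i hi => h ⟨i, hi⟩⟩
  rw [this]
  exact (isOpen_iInter_of_finite (ι := Fin n) fun i =>
    (isOpen_discrete _).preimage (continuous_apply (i : ℕ))).preimage continuous_subtype_val

theorem exists_cyl_subset {U : Set B.Path} (hU : IsOpen U) {x : B.Path} (hx : x ∈ U) :
    ∃ n, ∀ y : B.Path, B.samePrefix n y x → y ∈ U := by
  obtain ⟨U', hU', rfl⟩ := isOpen_induced_iff.mp hU
  have hmem : U' ∈ nhds x.1 := hU'.mem_nhds hx
  rw [nhds_pi] at hmem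
  obtain ⟨I, hIfin, t, ht, hsub⟩ := Filter.mem_pi.mp hmem
  obtain ⟨b, hb⟩ := hIfin.bddAbove
  refine ⟨b + 1, fun y hy => ?_⟩
  refine hsub ?_
  intro i hi
  have hib : i ≤ b := hb hi
  have := ht i
  rw [nhds_discrete] at this
  have hxi : x.1 i ∈ t i := this
  have : y.1 i = x.1 i := hy i (by omega)
  rw [this]; exact hxi

/-- A set determined by the first `n` edges of paths. -/
def Determined (n : ℕ) (A : Set B.Path) : Prop :=
  ∀ x y : B.Path, B.samePrefix n x y → (x ∈ A ↔ y ∈ A)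

theorem Determined.mono {n m : ℕ} {A : Set B.Path} (h : B.Determined n A) (hnm : n ≤ m) :
    B.Determined m A := fun x y hxy => h x y fun i hi => hxy i (lt_of_lt_of_le hi hnm)

theorem exists_determined {A : Set B.Path} (hA : IsClopen A) : ∃ n, B.Determined n A := by
  classical
  have hstep : ∀ x : B.Path, ∃ n : ℕ,
      (∀ y : B.Path, B.samePrefix n y x → y ∈ A) ∨
      (∀ y : B.Path, B.samePrefix n y x → y ∉ A) := by
    intro x
    by_cases hx : x ∈ A
    · obtain ⟨n, hn⟩ := B.exists_cyl_subset hA.2 hx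
      exact ⟨n, Or.inl hn⟩
    · obtain ⟨n, hn⟩ := B.exists_cyl_subset hA.compl.2 (by simpa using hx)
      exact ⟨n, Or.inr fun y hy => hn y hy⟩
  choose N hN using hstep
  have hcover : (Set.univ : Set B.Path) ⊆ ⋃ x : B.Path, {y : B.Path | B.samePrefix (N x) y x} :=
    fun x _ => Set.mem_iUnion.mpr ⟨x, B.samePrefix_refl _ x⟩
  obtain ⟨t, ht⟩ := isCompact_univ.elim_finite_subcover _ (fun x => B.isOpen_cyl (N x) x) hcover
  refine ⟨t.sup N, fun x y hxy => ?_⟩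
  obtain ⟨x₀, hx₀t, hyx₀⟩ : ∃ x₀ ∈ t, B.samePrefix (N x₀) y x₀ := by
    have := ht (Set.mem_univ y)
    simpa using this
  have hNle : N x₀ ≤ t.sup N := Finset.le_sup hx₀t
  have hxx₀ : B.samePrefix (N x₀) x x₀ :=
    B.samePrefix_trans (fun i hi => hxy i (lt_of_lt_of_le hi hNle)) hyx₀
  rcases hN x₀ with h | h
  · exact ⟨fun _ => h y hyx₀, fun _ => h x hxx₀⟩
  · exact ⟨fun hxA => absurd hxA (h x hxx₀), fun hyA => absurd hyA (h y hyx₀)⟩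


/-! ### Gluing and cylinder swaps -/

theorem path_heq (x : B.Path) {a b : ℕ} (h : a = b) : HEq (x.1 a) (x.1 b) := by
  subst h; rfl

theorem src_heq {a b : ℕ} (h : a = b) {e : B.E a} {e' : B.E b} (he : HEq e e') :
    HEq (B.src a e) (B.src b e') := by
  subst h; rw [eq_of_heq he]

theorem rng_heq {a b : ℕ} (h : a = b) {e : B.E a} {e' : B.E b} (he : HEq e e') :
    HEq (B.rng a e) (B.rng b e') := by
  subst h; rw [eq_of_heq he]

theorem seg_heq {m L : ℕ} (f : B.Seg m L) {a b : ℕ} (ha : a < L + 1) (hb : b < L + 1)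
    (h : a = b) : HEq (f.1 ⟨a, ha⟩) (f.1 ⟨b, hb⟩) := by
  subst h; rfl

/-- Splice: every deep-enough tail can be connected backwards to any given prefix,
when the diagram connects all vertices between the relevant levels. -/
theorem exists_extend (m L : ℕ)
    (hL : ∀ (v : B.V m) (w : B.V (m + L + 1)), 0 < B.numPaths m L v w)
    (z x : B.Path) :
    ∃ r : B.Path, (∀ i, i < m → r.1 i = z.1 i) ∧ (∀ i, m + L + 1 ≤ i → r.1 i = x.1 i) := by
  have hpos := hL (B.src m (z.1 m)) (B.src (m + L + 1) (x.1 (m + L + 1)))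
  rw [numPaths] at hpos
  obtain ⟨⟨f, hf1, hf2⟩⟩ := (Nat.card_pos_iff.mp hpos).1
  refine ⟨⟨fun j => if h0 : j < m then z.1 j else if h1 : j < m + L + 1 then
      cast (congrArg B.E (show m + (j - m) = j by omega)) (f.1 ⟨j - m, by omega⟩)
    else x.1 j, ?_⟩, fun i hi => by simp only [dif_pos hi], fun i hi => by
      simp only [dif_neg (show ¬ i < m by omega), dif_neg (show ¬ i < m + L + 1 by omega)]⟩
  intro j
  rcases lt_trichotomy (j + 1) m with hc | hc | hc
  · simp only [dif_pos (show j < m by omega), dif_pos hc]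
    exact z.2 j
  · -- junction with the prefix of z
    subst hc
    simp only [dif_pos (show j < j + 1 by omega), dif_neg (lt_irrefl (j + 1)),
      dif_pos (show j + 1 < j + 1 + L + 1 by omega)]
    rw [z.2 j, ← hf1]
    refine eq_of_heq (HEq.trans (B.src_heq (show j + 1 = (j + 1) + ((j + 1) - (j + 1)) by omega)
      (B.seg_heq f (by omega) (by omega) (by omega))) (B.src_heq (by omega) (cast_heq _ _).symm))
  · rcases lt_trichotomy (j + 1) (m + L + 1) with hd | hd | hd
    · -- middle region
      have hjm : m ≤ j := by omega
      simp only [dif_neg (show ¬ j < m by omega), dif_pos (show j < m + L + 1 by omega),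
        dif_neg (show ¬ j + 1 < m by omega), dif_pos hd]
      refine eq_of_heq (HEq.trans (B.rng_heq (show j = m + (j - m) by omega)
        (cast_heq _ _)) (HEq.trans (heq_of_eq (f.2 (j - m) (by omega)))
        (HEq.trans (B.src_heq (show m + (j - m + 1) = m + ((j + 1) - m) by omega)
          (B.seg_heq f (by omega) (by omega) (by omega)))
          (B.src_heq (by omega) (cast_heq _ _).symm))))
    · -- junction with the tail of x
      simp only [dif_neg (show ¬ j < m by omega), dif_pos (show j < m + L + 1 by omega),
        dif_neg (show ¬ j + 1 < m by omega), dif_neg (show ¬ j + 1 < m + L + 1 by omega)]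
      refine eq_of_heq (HEq.trans (B.rng_heq (show j = m + (j - m) by omega)
        (cast_heq _ _)) ?_)
      refine HEq.trans (B.rng_heq (show m + (j - m) = m + L by omega)
        (B.seg_heq f (by omega) (by omega) (by omega))) ?_
      rw [hf2]
      exact B.src_heq (by omega) (B.path_heq x (by omega))
    · simp only [dif_neg (show ¬ j < m by omega), dif_neg (show ¬ j < m + L + 1 by omega),
        dif_neg (show ¬ j + 1 < m by omega), dif_neg (show ¬ j + 1 < m + L + 1 by omega)]
      exact x.2 j

/-- Glue the prefix of `p` (of length `n`) onto the tail of `x`. -/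
def glue (n : ℕ) (p x : B.Path)
    (h : ∀ k, k + 1 = n → B.rng k (p.1 k) = B.src (k + 1) (x.1 (k + 1))) : B.Path :=
  ⟨fun i => if i < n then p.1 i else x.1 i, by
    intro i
    rcases lt_trichotomy (i + 1) n with h1 | h1 | h1
    · simp only [if_pos (show i < n by omega), if_pos h1]; exact p.2 i
    · simp only [if_pos (show i < n by omega), if_neg (show ¬ i + 1 < n by omega)]
      exact h i h1
    · simp only [if_neg (show ¬ i < n by omega), if_neg (show ¬ i + 1 < n by omega)]
      exact x.2 i⟩

theorem glue_lt {n : ℕ} {p x : B.Path} {h} {i : ℕ} (hi : i < n) :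
    (B.glue n p x h).1 i = p.1 i := if_pos hi

theorem glue_ge {n : ℕ} {p x : B.Path} {h} {i : ℕ} (hi : n ≤ i) :
    (B.glue n p x h).1 i = x.1 i := if_neg (not_lt.mpr hi)

theorem glue_samePrefix {n : ℕ} {p x : B.Path} {h} : B.samePrefix n (B.glue n p x h) p :=
  fun _ hi => B.glue_lt hi

theorem glue_eq_self {n : ℕ} {p x : B.Path} {h} (hxp : B.samePrefix n x p) :
    B.glue n p x h = x := by
  refine Subtype.ext (funext fun i => ?_)
  by_cases hi : i < n
  · rw [B.glue_lt hi]; exact (hxp i hi).symm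
  · exact B.glue_ge (by omega)

section Swap

variable (n : ℕ) (p q : B.Path) (htail : ∀ i, n ≤ i → p.1 i = q.1 i)

include htail in
theorem swap_junction_q : ∀ (x : B.Path), B.samePrefix n x p →
    ∀ k, k + 1 = n → B.rng k (q.1 k) = B.src (k + 1) (x.1 (k + 1)) := by
  intro x hx k hk
  calc B.rng k (q.1 k) = B.src (k + 1) (q.1 (k + 1)) := q.2 k
    _ = B.src (k + 1) (p.1 (k + 1)) := by rw [htail (k + 1) (by omega)]
    _ = B.rng k (p.1 k) := (p.2 k).symm
    _ = B.rng k (x.1 k) := by rw [hx k (by omega)]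
    _ = B.src (k + 1) (x.1 (k + 1)) := x.2 k

include htail in
theorem swap_junction_p : ∀ (x : B.Path), B.samePrefix n x q →
    ∀ k, k + 1 = n → B.rng k (p.1 k) = B.src (k + 1) (x.1 (k + 1)) := by
  intro x hx k hk
  calc B.rng k (p.1 k) = B.src (k + 1) (p.1 (k + 1)) := p.2 k
    _ = B.src (k + 1) (q.1 (k + 1)) := by rw [← htail (k + 1) (by omega)]
    _ = B.rng k (q.1 k) := (q.2 k).symm
    _ = B.rng k (x.1 k) := by rw [hx k (by omega)]
    _ = B.src (k + 1) (x.1 (k + 1)) := x.2 k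

open Classical in
/-- The function swapping the cylinders of `p` and `q` (which share a common tail). -/
def swapFun : B.Path → B.Path := fun x =>
  if h : B.samePrefix n x p then B.glue n q x (B.swap_junction_q n p q htail x h)
  else if h' : B.samePrefix n x q then B.glue n p x (B.swap_junction_p n p q htail x h')
  else x

theorem swapFun_of_prefix_p {x : B.Path} (h : B.samePrefix n x p) :
    B.swapFun n p q htail x = B.glue n q x (B.swap_junction_q n p q htail x h) := by
  rw [swapFun, dif_pos h]

theorem swapFun_of_prefix_q {x : B.Path} (h' : B.samePrefix n x q)
    (h : ¬ B.samePrefix n x p) :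
    B.swapFun n p q htail x = B.glue n p x (B.swap_junction_p n p q htail x h') := by
  rw [swapFun, dif_neg h, dif_pos h']

theorem swapFun_of_notmem {x : B.Path} (h : ¬ B.samePrefix n x p)
    (h' : ¬ B.samePrefix n x q) : B.swapFun n p q htail x = x := by
  rw [swapFun, dif_neg h, dif_neg h']

theorem swapFun_ge (x : B.Path) (i : ℕ) (hi : n ≤ i) :
    (B.swapFun n p q htail x).1 i = x.1 i := by
  rw [swapFun]
  split_ifs <;> first | rw [B.glue_ge hi] | rfl

theorem swapFun_involutive : Function.Involutive (B.swapFun n p q htail) := by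
  intro x
  by_cases h : B.samePrefix n x p
  · rw [B.swapFun_of_prefix_p n p q htail h]
    set y := B.glue n q x (B.swap_junction_q n p q htail x h) with hy
    have hyq : B.samePrefix n y q := B.glue_samePrefix
    by_cases hqp : B.samePrefix n q p
    · have hyp : B.samePrefix n y p := B.samePrefix_trans hyq hqp
      rw [B.swapFun_of_prefix_p n p q htail hyp]
      refine Subtype.ext (funext fun i => ?_)
      by_cases hi : i < n
      · rw [B.glue_lt hi]
        exact ((h i hi).trans (hqp i hi).symm).symm
      · rw [B.glue_ge (show n ≤ i by omega), hy, B.glue_ge (show n ≤ i by omega)]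
    · have hyp : ¬ B.samePrefix n y p := fun hyp =>
        hqp (B.samePrefix_trans (B.samePrefix_symm hyq) hyp)
      rw [B.swapFun_of_prefix_q n p q htail hyq hyp]
      refine Subtype.ext (funext fun i => ?_)
      by_cases hi : i < n
      · rw [B.glue_lt hi]; exact (h i hi).symm
      · rw [B.glue_ge (show n ≤ i by omega), hy, B.glue_ge (show n ≤ i by omega)]
  · by_cases h' : B.samePrefix n x q
    · rw [B.swapFun_of_prefix_q n p q htail h' h]
      set y := B.glue n p x (B.swap_junction_p n p q htail x h') with hy
      have hyp : B.samePrefix n y p := B.glue_samePrefix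
      rw [B.swapFun_of_prefix_p n p q htail hyp]
      refine Subtype.ext (funext fun i => ?_)
      by_cases hi : i < n
      · rw [B.glue_lt hi]; exact (h' i hi).symm
      · rw [B.glue_ge (show n ≤ i by omega), hy, B.glue_ge (show n ≤ i by omega)]
    · rw [B.swapFun_of_notmem n p q htail h h', B.swapFun_of_notmem n p q htail h h']

/-- The homeomorphism of the path space swapping the cylinders of `p` and `q`. -/
def swapPerm : Equiv.Perm B.Path :=
  Function.Involutive.toPerm _ (B.swapFun_involutive n p q htail)

theorem swapPerm_apply (x : B.Path) : B.swapPerm n p q htail x = B.swapFun n p q htail x := rfl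

theorem swapPerm_inv : (B.swapPerm n p q htail)⁻¹ = B.swapPerm n p q htail :=
  Equiv.Perm.inv_def _ ▸ Function.Involutive.toPerm_symm _

theorem swapPerm_isLevel : B.IsLevel n (B.swapPerm n p q htail) := by
  constructor
  · exact fun x i hi => B.swapFun_ge n p q htail x i hi
  · intro x y hxy i hi
    rw [swapPerm_apply, swapPerm_apply]
    have hxp : B.samePrefix n x p ↔ B.samePrefix n y p :=
      ⟨fun h => B.samePrefix_trans (fun j hj => (hxy j hj).symm) h,
       fun h => B.samePrefix_trans hxy h⟩
    have hxq : B.samePrefix n x q ↔ B.samePrefix n y q :=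
      ⟨fun h => B.samePrefix_trans (fun j hj => (hxy j hj).symm) h,
       fun h => B.samePrefix_trans hxy h⟩
    by_cases h : B.samePrefix n x p
    · rw [B.swapFun_of_prefix_p n p q htail h, B.swapFun_of_prefix_p n p q htail (hxp.mp h),
        B.glue_lt hi, B.glue_lt hi]
    · by_cases h' : B.samePrefix n x q
      · rw [B.swapFun_of_prefix_q n p q htail h' h,
          B.swapFun_of_prefix_q n p q htail (hxq.mp h') (fun hc => h (hxp.mpr hc)),
          B.glue_lt hi, B.glue_lt hi]
      · rw [B.swapFun_of_notmem n p q htail h h',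
          B.swapFun_of_notmem n p q htail (fun hc => h (hxp.mpr hc))
            (fun hc => h' (hxq.mpr hc))]
        exact hxy i hi

theorem swapPerm_mem_level : B.swapPerm n p q htail ∈ B.level n :=
  ⟨B.swapPerm_isLevel n p q htail, by
    rw [B.swapPerm_inv n p q htail]; exact B.swapPerm_isLevel n p q htail⟩

/-- The cylinder swap as an element of the full group. -/
def swapG : ↥B.fullGroup :=
  ⟨B.swapPerm n p q htail, ⟨n, B.swapPerm_mem_level n p q htail⟩⟩

end Swap

/-! ### The triple swap decomposition -/

theorem swapPerm_triple (n : ℕ) (p q r : B.Path)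
    (htpq : ∀ i, n ≤ i → p.1 i = q.1 i) (htpr : ∀ i, n ≤ i → p.1 i = r.1 i)
    (htrq : ∀ i, n ≤ i → r.1 i = q.1 i)
    (hpq : ¬ B.samePrefix n p q) (hrp : ¬ B.samePrefix n r p) (hrq : ¬ B.samePrefix n r q) :
    B.swapPerm n p q htpq =
      B.swapPerm n p r htpr * B.swapPerm n r q htrq * B.swapPerm n p r htpr := by
  refine Equiv.ext fun x => ?_
  simp only [Equiv.Perm.mul_apply, swapPerm_apply]
  by_cases h1 : B.samePrefix n x p
  · have h2 : ¬ B.samePrefix n x q := fun hc =>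
      hpq (B.samePrefix_trans (B.samePrefix_symm h1) hc)
    have h3 : ¬ B.samePrefix n x r := fun hc =>
      hrp (B.samePrefix_trans (B.samePrefix_symm hc) h1)
    rw [B.swapFun_of_prefix_p n p q htpq h1, B.swapFun_of_prefix_p n p r htpr h1,
      B.swapFun_of_prefix_p n r q htrq B.glue_samePrefix]
    have hy2q : B.samePrefix n (B.glue n q (B.glue n r x
        (B.swap_junction_q n p r htpr x h1)) (B.swap_junction_q n r q htrq _
          B.glue_samePrefix)) q := B.glue_samePrefix
    have hy2p : ¬ B.samePrefix n (B.glue n q (B.glue n r x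
        (B.swap_junction_q n p r htpr x h1)) (B.swap_junction_q n r q htrq _
          B.glue_samePrefix)) p := fun hc =>
      hpq (B.samePrefix_trans (B.samePrefix_symm hc) hy2q)
    have hy2r : ¬ B.samePrefix n (B.glue n q (B.glue n r x
        (B.swap_junction_q n p r htpr x h1)) (B.swap_junction_q n r q htrq _
          B.glue_samePrefix)) r := fun hc =>
      hrq (B.samePrefix_trans (B.samePrefix_symm hc) hy2q)
    rw [B.swapFun_of_notmem n p r htpr hy2p hy2r]
    refine Subtype.ext (funext fun i => ?_)
    by_cases hi : i < n
    · rw [B.glue_lt hi, B.glue_lt hi]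
    · rw [B.glue_ge (show n ≤ i by omega), B.glue_ge (show n ≤ i by omega),
        B.glue_ge (show n ≤ i by omega)]
  · by_cases h2 : B.samePrefix n x q
    · have h3 : ¬ B.samePrefix n x r := fun hc =>
        hrq (B.samePrefix_trans (B.samePrefix_symm hc) h2)
      rw [B.swapFun_of_prefix_q n p q htpq h2 h1, B.swapFun_of_notmem n p r htpr h1 h3,
        B.swapFun_of_prefix_q n r q htrq h2 h3,
        B.swapFun_of_prefix_q n p r htpr B.glue_samePrefix
          (fun hc => hrp (B.samePrefix_trans (B.samePrefix_symm B.glue_samePrefix) hc))]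
      refine Subtype.ext (funext fun i => ?_)
      by_cases hi : i < n
      · rw [B.glue_lt hi, B.glue_lt hi]
      · rw [B.glue_ge (show n ≤ i by omega), B.glue_ge (show n ≤ i by omega),
          B.glue_ge (show n ≤ i by omega)]
    · by_cases h3 : B.samePrefix n x r
      · rw [B.swapFun_of_notmem n p q htpq h1 h2,
          B.swapFun_of_prefix_q n p r htpr h3 h1]
        have hy1p : B.samePrefix n (B.glue n p x (B.swap_junction_p n p r htpr x h3)) p :=
          B.glue_samePrefix
        have hy1r : ¬ B.samePrefix n (B.glue n p x (B.swap_junction_p n p r htpr x h3)) r :=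
          fun hc => hrp (B.samePrefix_symm (B.samePrefix_trans
            (B.samePrefix_symm hy1p) hc))
        have hy1q : ¬ B.samePrefix n (B.glue n p x (B.swap_junction_p n p r htpr x h3)) q :=
          fun hc => hpq (B.samePrefix_trans (B.samePrefix_symm hy1p) hc)
        rw [B.swapFun_of_notmem n r q htrq hy1r hy1q,
          B.swapFun_of_prefix_p n p r htpr hy1p]
        refine Subtype.ext (funext fun i => ?_)
        by_cases hi : i < n
        · rw [B.glue_lt hi]
          exact h3 i hi
        · rw [B.glue_ge (show n ≤ i by omega), B.glue_ge (show n ≤ i by omega)]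
      · rw [B.swapFun_of_notmem n p q htpq h1 h2, B.swapFun_of_notmem n p r htpr h1 h3,
          B.swapFun_of_notmem n r q htrq h3 h2, B.swapFun_of_notmem n p r htpr h1 h3]

/-! ### Membership in `G°` -/

theorem mem_level_iff {n : ℕ} {g : Equiv.Perm B.Path} :
    g ∈ B.level n ↔ B.IsLevel n g ∧ B.IsLevel n g⁻¹ := Iff.rfl

theorem mem_Gcirc_iff {D : Set B.Path} {g : ↥B.fullGroup} :
    g ∈ B.Gcirc D ↔ ∀ x ∈ D, g.1 x = x := by
  simp only [Gcirc, Subgroup.mem_iInf, MulAction.mem_stabilizer_iff]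
  rfl

theorem Gcirc_anti {D D' : Set B.Path} (h : D ⊆ D') : B.Gcirc D' ≤ B.Gcirc D :=
  fun _g hg => B.mem_Gcirc_iff.mpr fun x hx => B.mem_Gcirc_iff.mp hg x (h hx)

theorem swapG_mem_Gcirc (n : ℕ) (p q : B.Path) (htail : ∀ i, n ≤ i → p.1 i = q.1 i)
    {D : Set B.Path} (hp : ∀ y, B.samePrefix n y p → y ∉ D)
    (hq : ∀ y, B.samePrefix n y q → y ∉ D) : B.swapG n p q htail ∈ B.Gcirc D :=
  B.mem_Gcirc_iff.mpr fun x hx =>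
    B.swapFun_of_notmem n p q htail (fun h => hp x h hx) (fun h => hq x h hx)

/-! ### Prefix maps and moved sets -/

/-- The prefix of length `n` of a path. -/
def pr (n : ℕ) (x : B.Path) : ∀ i : Fin n, B.E i := fun i => x.1 i

theorem pr_eq_iff {n : ℕ} {x y : B.Path} : B.pr n x = B.pr n y ↔ B.samePrefix n x y :=
  ⟨fun h i hi => congrFun h ⟨i, hi⟩, fun h => funext fun i => h i i.2⟩

theorem pr_apply_eq {n : ℕ} {u : Equiv.Perm B.Path} (hu : B.IsLevel n u) {x y : B.Path}
    (h : B.pr n x = B.pr n y) : B.pr n (u x) = B.pr n (u y) :=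
  funext fun i => hu.2 x y (fun j hj => congrFun h ⟨j, hj⟩) i i.2

/-- The set of length-`n` prefixes moved by a permutation. -/
def moved (n : ℕ) (u : Equiv.Perm B.Path) : Set (∀ i : Fin n, B.E i) :=
  {f | ∃ x : B.Path, B.pr n x = f ∧ B.pr n (u x) ≠ f}

theorem eq_one_of_moved_empty {n : ℕ} {u : Equiv.Perm B.Path} (hu : u ∈ B.level n)
    (h : B.moved n u = ∅) : u = 1 := by
  refine Equiv.ext fun x => ?_
  have hpr : B.pr n (u x) = B.pr n x := by
    by_contra hne
    exact absurd (Set.eq_empty_iff_forall_notMem.mp h (B.pr n x)) (fun hh => hh ⟨x, rfl, hne⟩)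
  refine Subtype.ext (funext fun i => ?_)
  by_cases hi : i < n
  · exact congrFun hpr ⟨i, hi⟩
  · exact hu.1.1 x i (by omega)

end BratteliDiagram

/-! ### Conjugation of subgroups -/

theorem mem_conjSub {Γ : Type*} [Group Γ] {g h : Γ} {H : Subgroup Γ} :
    h ∈ conjSub g H ↔ g⁻¹ * h * g ∈ H := by
  simp only [conjSub, Subgroup.mem_map, MulEquiv.coe_toMonoidHom, MulAut.conj_apply]
  constructor
  · rintro ⟨k, hk, rfl⟩
    have : g⁻¹ * (g * k * g⁻¹) * g = k := by group
    rwa [this]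
  · intro hk
    exact ⟨g⁻¹ * h * g, hk, by group⟩

/-- The subgroup of elements normalizing a given subgroup via `conjSub`. -/
def normIn {Γ : Type*} [Group Γ] (H : Subgroup Γ) : Subgroup Γ where
  carrier := {g | conjSub g H = H}
  one_mem' := by
    refine Subgroup.ext fun h => ?_
    rw [mem_conjSub]
    simp
  mul_mem' := by
    intro a b ha hb
    refine Subgroup.ext fun h => ?_
    have ha' := SetLike.ext_iff.mp ha
    have hb' := SetLike.ext_iff.mp hb
    rw [mem_conjSub]
    have e : (a * b)⁻¹ * h * (a * b) = b⁻¹ * (a⁻¹ * h * a) * b := by group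
    rw [e, ← mem_conjSub (g := b), hb' _, ← mem_conjSub (g := a), ha' _]
  inv_mem' := by
    intro a ha
    refine Subgroup.ext fun h => ?_
    have ha' := SetLike.ext_iff.mp ha (a * h * a⁻¹)
    rw [mem_conjSub] at ha' ⊢
    have e : a⁻¹ * (a * h * a⁻¹) * a = h := by group
    rw [e] at ha'
    have e2 : a⁻¹⁻¹ * h * a⁻¹ = a * h * a⁻¹ := by group
    rw [e2]
    exact ha'.symm

theorem mem_normIn {Γ : Type*} [Group Γ] {g : Γ} {H : Subgroup Γ} :
    g ∈ normIn H ↔ conjSub g H = H := Iff.rfl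

namespace BratteliDiagram

variable (B : BratteliDiagram)

/-- The key generation result: if `A ∪ C ≠ X`, every element fixing `A ∩ C` pointwise
lies in the subgroup generated by the pointwise stabilizers of `A` and of `C`. -/
theorem Gcirc_inter_le (hsimple : B.IsSimple) {A C : Set B.Path}
    (hA : IsClopen A) (hC : IsClopen C) (hU : A ∪ C ≠ Set.univ) :
    B.Gcirc (A ∩ C) ≤ B.Gcirc A ⊔ B.Gcirc C := by
  classical
  obtain ⟨nA, hnA⟩ := B.exists_determined hA
  obtain ⟨nC, hnC⟩ := B.exists_determined hC
  obtain ⟨z, hz⟩ := (Set.ne_univ_iff_exists_notMem _).mp hU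
  intro g hg
  obtain ⟨n₂, hgl0⟩ := g.2
  set m := nA + nC + n₂ + 1 with hm
  obtain ⟨L, hL⟩ := hsimple m
  set n := m + L + 1 with hn
  have hnA' : B.Determined n A := Determined.mono B hnA (by omega)
  have hnC' : B.Determined n C := Determined.mono B hnC (by omega)
  have hgl : g.1 ∈ B.level n := B.level_mono (show n₂ ≤ n by omega) hgl0
  clear hgl0
  -- cylinders around `z` of length `m` avoid `A ∪ C`
  have hzcyl : ∀ y : B.Path, (∀ i, i < m → y.1 i = z.1 i) → y ∉ A ∪ C := by
    intro y hy hyAC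
    rcases hyAC with hyA | hyC
    · exact hz (Or.inl ((hnA y z fun i hi => hy i (by omega)).mp hyA))
    · exact hz (Or.inr ((hnC y z fun i hi => hy i (by omega)).mp hyC))
  -- main induction on the number of moved prefixes
  suffices H : ∀ (k : ℕ) (h : ↥B.fullGroup), h.1 ∈ B.level n → h ∈ B.Gcirc (A ∩ C) →
      (B.moved n h.1).ncard ≤ k → h ∈ B.Gcirc A ⊔ B.Gcirc C by
    exact H (B.moved n g.1).ncard g hgl hg le_rfl
  intro k
  induction k with
  | zero =>
    intro h hhl hhAC hcard
    have hemp : B.moved n h.1 = ∅ := by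
      rw [← Set.ncard_eq_zero (Set.toFinite _)]; omega
    have h1 : h = 1 := Subtype.ext (B.eq_one_of_moved_empty hhl hemp)
    rw [h1]; exact one_mem _
  | succ k ih =>
    intro h hhl hhAC hcard
    by_cases hemp : B.moved n h.1 = ∅
    · have h1 : h = 1 := Subtype.ext (B.eq_one_of_moved_empty hhl hemp)
      rw [h1]; exact one_mem _
    obtain ⟨f₀, x₀, hx₀f, hx₀'⟩ := Set.nonempty_iff_ne_empty.mpr hemp
    have hx₀ : B.pr n (h.1 x₀) ≠ B.pr n x₀ := hx₀f ▸ hx₀'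
    have hfix : ∀ y ∈ A ∩ C, h.1 y = y := B.mem_Gcirc_iff.mp hhAC
    have htail : ∀ i, n ≤ i → x₀.1 i = (h.1 x₀).1 i := fun i hi => (hhl.1.1 x₀ i hi).symm
    set τ := B.swapG n x₀ (h.1 x₀) htail with hτ
    have hPQ : ¬ B.samePrefix n x₀ (h.1 x₀) := fun hc =>
      hx₀ (B.pr_eq_iff.mpr (B.samePrefix_symm hc))
    -- the cylinder of x₀ avoids A ∩ C
    have hxAC : ∀ y, B.samePrefix n y x₀ → y ∉ A ∩ C := by
      intro y hy hyAC
      have hx₀AC : x₀ ∈ A ∩ C :=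
        ⟨(hnA' x₀ y (B.samePrefix_symm hy)).mpr hyAC.1,
         (hnC' x₀ y (B.samePrefix_symm hy)).mpr hyAC.2⟩
      exact hx₀ (by rw [hfix x₀ hx₀AC])
    -- the cylinder of h x₀ avoids A ∩ C
    have hgxAC : ∀ y, B.samePrefix n y (h.1 x₀) → y ∉ A ∩ C := by
      intro y hy hyAC
      have hgx : h.1 x₀ ∈ A ∩ C :=
        ⟨(hnA' (h.1 x₀) y (B.samePrefix_symm hy)).mpr hyAC.1,
         (hnC' (h.1 x₀) y (B.samePrefix_symm hy)).mpr hyAC.2⟩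
      have hinv := B.mem_Gcirc_iff.mp (inv_mem hhAC) _ hgx
      have : x₀ = h.1 x₀ := by
        conv_lhs => rw [← Equiv.symm_apply_apply h.1 x₀]
        exact hinv
      exact hx₀ (by rw [← this])
    have hτAC : τ ∈ B.Gcirc (A ∩ C) := B.swapG_mem_Gcirc n _ _ htail hxAC hgxAC
    have hτlevel : τ.1 ∈ B.level n := B.swapPerm_mem_level n _ _ htail
    -- τ lies in the subgroup generated by the two stabilizers
    have hτsup : τ ∈ B.Gcirc A ⊔ B.Gcirc C := by
      have hdx : (∀ y, B.samePrefix n y x₀ → y ∉ A) ∨ (∀ y, B.samePrefix n y x₀ → y ∉ C) := by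
        by_contra hcon
        push_neg at hcon
        obtain ⟨⟨y₁, hy₁, hy₁A⟩, y₂, hy₂, hy₂C⟩ := hcon
        exact hxAC x₀ (B.samePrefix_refl n x₀)
          ⟨(hnA' x₀ y₁ (B.samePrefix_symm hy₁)).mpr hy₁A,
           (hnC' x₀ y₂ (B.samePrefix_symm hy₂)).mpr hy₂C⟩
      have hdq : (∀ y, B.samePrefix n y (h.1 x₀) → y ∉ A) ∨
          (∀ y, B.samePrefix n y (h.1 x₀) → y ∉ C) := by
        by_contra hcon
        push_neg at hcon
        obtain ⟨⟨y₁, hy₁, hy₁A⟩, y₂, hy₂, hy₂C⟩ := hcon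
        exact hgxAC (h.1 x₀) (B.samePrefix_refl n _)
          ⟨(hnA' (h.1 x₀) y₁ (B.samePrefix_symm hy₁)).mpr hy₁A,
           (hnC' (h.1 x₀) y₂ (B.samePrefix_symm hy₂)).mpr hy₂C⟩
      -- get the reserve path
      obtain ⟨r, hr1, hr2⟩ := B.exists_extend m L hL z x₀
      have hrAC : ∀ y, B.samePrefix n y r → y ∉ A ∪ C := fun y hy =>
        hzcyl y fun i hi => (hy i (by omega)).trans (hr1 i hi)
      have htpr : ∀ i, n ≤ i → x₀.1 i = r.1 i := fun i hi => (hr2 i hi).symm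
      have htrq : ∀ i, n ≤ i → r.1 i = (h.1 x₀).1 i := fun i hi =>
        (hr2 i hi).trans (htail i hi)
      -- decomposition of τ into three swaps, valid whenever all prefixes are distinct
      have hdec : (¬ B.samePrefix n r x₀) → (¬ B.samePrefix n r (h.1 x₀)) →
          τ = B.swapG n x₀ r htpr * B.swapG n r (h.1 x₀) htrq * B.swapG n x₀ r htpr := by
        intro hrx hrq
        exact Subtype.ext (B.swapPerm_triple n x₀ (h.1 x₀) r htail htpr htrq hPQ hrx hrq)
      rcases hdx with hpA | hpC
      · rcases hdq with hqA | hqC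
        · exact Subgroup.mem_sup_left (B.swapG_mem_Gcirc n _ _ htail hpA hqA)
        · -- mixed case: x₀-cylinder avoids A, (h x₀)-cylinder avoids C
          by_cases hpC' : ∀ y, B.samePrefix n y x₀ → y ∉ C
          · exact Subgroup.mem_sup_right (B.swapG_mem_Gcirc n _ _ htail hpC' hqC)
          by_cases hqA' : ∀ y, B.samePrefix n y (h.1 x₀) → y ∉ A
          · exact Subgroup.mem_sup_left (B.swapG_mem_Gcirc n _ _ htail hpA hqA')
          push_neg at hpC' hqA'
          obtain ⟨y₁, hy₁, hy₁C⟩ := hpC'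
          obtain ⟨y₂, hy₂, hy₂A⟩ := hqA'
          have hrx : ¬ B.samePrefix n r x₀ := fun hc =>
            hrAC y₁ (B.samePrefix_trans hy₁ (B.samePrefix_symm hc)) (Or.inr hy₁C)
          have hrq : ¬ B.samePrefix n r (h.1 x₀) := fun hc =>
            hrAC y₂ (B.samePrefix_trans hy₂ (B.samePrefix_symm hc)) (Or.inl hy₂A)
          rw [hdec hrx hrq]
          refine mul_mem (mul_mem ?_ ?_) ?_
          · exact Subgroup.mem_sup_left (B.swapG_mem_Gcirc n _ _ htpr hpA
              (fun y hy hyA => hrAC y hy (Or.inl hyA)))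
          · exact Subgroup.mem_sup_right (B.swapG_mem_Gcirc n _ _ htrq
              (fun y hy hyC => hrAC y hy (Or.inr hyC)) hqC)
          · exact Subgroup.mem_sup_left (B.swapG_mem_Gcirc n _ _ htpr hpA
              (fun y hy hyA => hrAC y hy (Or.inl hyA)))
      · rcases hdq with hqA | hqC
        · -- mixed case: x₀-cylinder avoids C, (h x₀)-cylinder avoids A
          by_cases hpA' : ∀ y, B.samePrefix n y x₀ → y ∉ A
          · exact Subgroup.mem_sup_left (B.swapG_mem_Gcirc n _ _ htail hpA' hqA)
          by_cases hqC' : ∀ y, B.samePrefix n y (h.1 x₀) → y ∉ C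
          · exact Subgroup.mem_sup_right (B.swapG_mem_Gcirc n _ _ htail hpC hqC')
          push_neg at hpA' hqC'
          obtain ⟨y₁, hy₁, hy₁A⟩ := hpA'
          obtain ⟨y₂, hy₂, hy₂C⟩ := hqC'
          have hrx : ¬ B.samePrefix n r x₀ := fun hc =>
            hrAC y₁ (B.samePrefix_trans hy₁ (B.samePrefix_symm hc)) (Or.inl hy₁A)
          have hrq : ¬ B.samePrefix n r (h.1 x₀) := fun hc =>
            hrAC y₂ (B.samePrefix_trans hy₂ (B.samePrefix_symm hc)) (Or.inr hy₂C)
          rw [hdec hrx hrq]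
          refine mul_mem (mul_mem ?_ ?_) ?_
          · exact Subgroup.mem_sup_right (B.swapG_mem_Gcirc n _ _ htpr hpC
              (fun y hy hyC => hrAC y hy (Or.inr hyC)))
          · exact Subgroup.mem_sup_left (B.swapG_mem_Gcirc n _ _ htrq
              (fun y hy hyA => hrAC y hy (Or.inl hyA)) hqA)
          · exact Subgroup.mem_sup_right (B.swapG_mem_Gcirc n _ _ htpr hpC
              (fun y hy hyC => hrAC y hy (Or.inr hyC)))
        · exact Subgroup.mem_sup_right (B.swapG_mem_Gcirc n _ _ htail hpC hqC)
    -- pass to τ * h and recurse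
    set h' := τ * h with hh'
    have hh'l : h'.1 ∈ B.level n := mul_mem hτlevel hhl
    have hh'AC : h' ∈ B.Gcirc (A ∩ C) := mul_mem hτAC hhAC
    -- prefix action of τ
    have hτP : ∀ w : B.Path, B.pr n w = B.pr n x₀ → B.pr n (τ.1 w) = B.pr n (h.1 x₀) := by
      intro w hw
      have hsp : B.samePrefix n w x₀ := B.pr_eq_iff.mp hw
      have := B.swapFun_of_prefix_p n x₀ (h.1 x₀) htail hsp
      show B.pr n (B.swapFun n x₀ (h.1 x₀) htail w) = _
      rw [this]
      exact funext fun i => B.glue_lt i.2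
    have hτQ : ∀ w : B.Path, B.pr n w = B.pr n (h.1 x₀) → B.pr n (τ.1 w) = B.pr n x₀ := by
      intro w hw
      have hsp : B.samePrefix n w (h.1 x₀) := B.pr_eq_iff.mp hw
      have hnp : ¬ B.samePrefix n w x₀ := fun hc => hPQ (B.samePrefix_trans
        (B.samePrefix_symm hc) hsp)
      have := B.swapFun_of_prefix_q n x₀ (h.1 x₀) htail hsp hnp
      show B.pr n (B.swapFun n x₀ (h.1 x₀) htail w) = _
      rw [this]
      exact funext fun i => B.glue_lt i.2
    have hτO : ∀ w : B.Path, B.pr n w ≠ B.pr n x₀ → B.pr n w ≠ B.pr n (h.1 x₀) →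
        τ.1 w = w := by
      intro w hw1 hw2
      exact B.swapFun_of_notmem n x₀ (h.1 x₀) htail
        (fun hc => hw1 (B.pr_eq_iff.mpr hc)) (fun hc => hw2 (B.pr_eq_iff.mpr hc))
    -- the prefix of h x₀ is itself moved by h
    have hQmoved : B.pr n (h.1 (h.1 x₀)) ≠ B.pr n (h.1 x₀) := by
      intro hcon
      have hinvlevel : B.IsLevel n h.1⁻¹ := hhl.2
      have := B.pr_apply_eq hinvlevel hcon
      simp only [Equiv.Perm.coe_inv, Equiv.symm_apply_apply] at this
      exact hx₀ this
    -- the moved set strictly decreases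
    have hsub : B.moved n h'.1 ⊆ B.moved n h.1 \ {B.pr n x₀} := by
      rintro f ⟨y, hyf, hyne⟩
      have happ : h'.1 y = τ.1 (h.1 y) := rfl
      constructor
      · -- f is moved by h
        by_contra hfm
        have hall : ∀ w : B.Path, B.pr n w = f → B.pr n (h.1 w) = f := by
          intro w hw
          by_contra hc
          exact hfm ⟨w, hw, hc⟩
        have hhy : B.pr n (h.1 y) = f := hall y hyf
        have hfQ : f ≠ B.pr n (h.1 x₀) := by
          intro hfe
          exact hfm (hfe ▸ ⟨h.1 x₀, rfl, hQmoved⟩)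
        have hfP : f ≠ B.pr n x₀ := by
          intro hfe
          have := B.pr_apply_eq hhl.1 (hyf.trans (hfe.trans rfl) : B.pr n y = B.pr n x₀)
          -- pr (h y) = pr (h x₀), so f = Q, contradiction
          exact hfQ (hhy ▸ this ▸ rfl)
        have : τ.1 (h.1 y) = h.1 y := hτO _ (hhy.trans_ne hfP) (hhy.trans_ne hfQ)
        exact hyne (by rw [happ, this, hhy])
      · -- f ≠ pr x₀
        simp only [Set.mem_singleton_iff]
        intro hfe
        have hyx : B.pr n y = B.pr n x₀ := hyf.trans hfe
        have h1 : B.pr n (h.1 y) = B.pr n (h.1 x₀) := B.pr_apply_eq hhl.1 hyx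
        have h2 : B.pr n (τ.1 (h.1 y)) = B.pr n x₀ := hτQ _ h1
        exact hyne (by rw [happ, h2, hfe])
    have hcard' : (B.moved n h'.1).ncard ≤ k := by
      have h1 : (B.moved n h'.1).ncard ≤ (B.moved n h.1 \ {B.pr n x₀}).ncard :=
        Set.ncard_le_ncard hsub (Set.toFinite _)
      have h2 : (B.moved n h.1 \ {B.pr n x₀}).ncard < (B.moved n h.1).ncard :=
        Set.ncard_diff_singleton_lt_of_mem ⟨x₀, rfl, hx₀⟩ (Set.toFinite _)
      omega
    have hrec := ih h' hh'l hh'AC hcard'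
    have hfinal : h = τ⁻¹ * h' := by rw [hh', inv_mul_cancel_left]
    rw [hfinal]
    exact mul_mem (inv_mem hτsup) hrec

end BratteliDiagram

/-- for clopen sets `A, C` with `A ∪ C ≠ X`, `F(A ∩ C) = F(A) ∩ F(C)`. -/
theorem FF_inter (B : BratteliDiagram) (hsimple : B.IsSimple)
    (A C : Set B.Path) (hA : IsClopen A) (hC : IsClopen C)
    (hU : A ∪ C ≠ Set.univ) :
    B.FF (A ∩ C) = B.FF A ∩ B.FF C := by
  ext H
  simp only [Set.mem_inter_iff, BratteliDiagram.FF, Set.mem_setOf_eq]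
  constructor
  · intro hH
    exact ⟨fun g hg => hH g (B.Gcirc_anti Set.inter_subset_left hg),
           fun g hg => hH g (B.Gcirc_anti Set.inter_subset_right hg)⟩
  · rintro ⟨h1, h2⟩ g hg
    have hle : B.Gcirc A ⊔ B.Gcirc C ≤ normIn H :=
      sup_le (fun a ha => mem_normIn.mpr (h1 a ha)) (fun a ha => mem_normIn.mpr (h2 a ha))
    exact mem_normIn.mp (hle (B.Gcirc_inter_le hsimple hA hC hU hg))
end
end

section
/- Let B be an even simple Bratteli diagram with full group G=G_B=⋃_n G_n and path space X=X_B, let A⊊X be clopen, and for n≥1 let G°_n(A)=G_n∩G°(A) be the set of elements of G_n fixing A pointwise. Then for every k≥0 and every Borel probability measure μ̄ on X^k invariant under the diagonal action of G, one has lim_{n→∞} (1/|G°_n(A)|) Σ_{g∈G°_n(A)} μ̄(Fix_{X^k}(g)) = μ̄(A^k), and the convergence is monotone. -/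
open MeasureTheory Filter
open scoped ENNReal ComplexOrder

noncomputable section

section Scratch
variable (B : BratteliDiagram)

instance (i : ℕ) : DiscreteTopology (B.E i) := ⟨rfl⟩

instance (i : ℕ) : Fintype (B.E i) := B.fintypeE i

theorem isClosed_path_set : IsClosed {x : ∀ i, B.E i | ∀ i, B.rng i (x i) = B.src (i + 1) (x (i + 1))} := by
  have : {x : ∀ i, B.E i | ∀ i, B.rng i (x i) = B.src (i + 1) (x (i + 1))}
      = ⋂ i, (fun x : ∀ i, B.E i => (x i, x (i+1))) ⁻¹' {p | B.rng i p.1 = B.src (i+1) p.2} := by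
    ext x; simp [Set.mem_iInter]
  rw [this]
  exact isClosed_iInter fun i => (IsClosed.preimage (by continuity) (isClosed_discrete _))

instance : CompactSpace B.Path :=
  isCompact_iff_compactSpace.mp (isClosed_path_set B).isCompact

instance : BorelSpace B.Path := ⟨rfl⟩

theorem continuous_coord (i : ℕ) : Continuous (fun x : B.Path => x.1 i) :=
  (continuous_apply i).comp continuous_subtype_val

end Scratch
section Scratch2
variable (B : BratteliDiagram)

theorem exists_level_determines {A : Set B.Path} (hA : IsClopen A) :
    ∃ m : ℕ, ∀ u v : B.Path, (∀ i, i < m → u.1 i = v.1 i) → (u ∈ A ↔ v ∈ A) := by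
  classical
  set D : ℕ → Set (B.Path × B.Path) :=
    fun m => {p | (∀ i, i < m → p.1.1 i = p.2.1 i) ∧ p.1 ∈ A ∧ p.2 ∉ A} with hD
  have hclosed : ∀ m, IsClosed (D m) := by
    intro m
    have h1 : IsClosed {p : B.Path × B.Path | ∀ i, i < m → p.1.1 i = p.2.1 i} := by
      have : {p : B.Path × B.Path | ∀ i, i < m → p.1.1 i = p.2.1 i}
          = ⋂ i ∈ Set.Iio m, (fun p : B.Path × B.Path => (p.1.1 i, p.2.1 i)) ⁻¹' {q | q.1 = q.2} := by
        ext p; simp [Set.mem_iInter]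
      rw [this]
      exact isClosed_biInter fun i _ => IsClosed.preimage
        (((continuous_coord B i).comp continuous_fst).prodMk
          ((continuous_coord B i).comp continuous_snd)) (isClosed_discrete _)
    have h2 : IsClosed {p : B.Path × B.Path | p.1 ∈ A} :=
      hA.isClosed.preimage continuous_fst
    have h3 : IsClosed {p : B.Path × B.Path | p.2 ∉ A} :=
      hA.isOpen.isClosed_compl.preimage continuous_snd
    exact (h1.inter (h2.inter h3) : _)
  have hiInter : (Set.univ ∩ ⋂ m, D m) = ∅ := by
    rw [Set.univ_inter, Set.eq_empty_iff_forall_notMem]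
    rintro ⟨u, v⟩ hp
    simp only [Set.mem_iInter, hD, Set.mem_setOf_eq] at hp
    have : u = v := Subtype.ext (funext fun i => (hp (i+1)).1 i (by omega))
    exact (hp 0).2.2 (this ▸ (hp 0).2.1)
  have hdir : Directed (· ⊇ ·) D := by
    intro a b
    refine ⟨max a b, fun p hp => ⟨fun i hi => hp.1 i (by omega), hp.2⟩,
      fun p hp => ⟨fun i hi => hp.1 i (by omega), hp.2⟩⟩
  obtain ⟨m, hm⟩ := CompactSpace.isCompact_univ.elim_directed_family_closed D hclosed hiInter hdir
  refine ⟨m, fun u v huv => ⟨fun hu => ?_, fun hv => ?_⟩⟩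
  · by_contra hv
    exact Set.eq_empty_iff_forall_notMem.mp hm (u, v) ⟨Set.mem_univ _, huv, hu, hv⟩
  · by_contra hu
    exact Set.eq_empty_iff_forall_notMem.mp hm (v, u)
      ⟨Set.mem_univ _, fun i hi => (huv i hi).symm, hv, hu⟩

end Scratch2
section Scratch3
variable (B : BratteliDiagram)

theorem finite_level (n : ℕ) : Finite ↥(B.level n) := by
  classical
  refine Finite.of_injective
    (fun g : ↥(B.level n) => fun s : ∀ i : Fin n, B.E i =>
      if h : ∃ x : B.Path, ∀ i : Fin n, x.1 i = s i then
        some (fun i : Fin n => (g.1 h.choose).1 i) else none) ?_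
  intro g g' hgg'
  refine Subtype.ext (Equiv.ext fun x => ?_)
  refine Subtype.ext (funext fun i => ?_)
  rcases lt_or_ge i n with hi | hi
  · have hex : ∃ y : B.Path, ∀ j : Fin n, y.1 j = x.1 j := ⟨x, fun _ => rfl⟩
    have := congrFun hgg' (fun j : Fin n => x.1 j)
    dsimp only at this
    rw [dif_pos hex, dif_pos hex] at this
    have h2 := Option.some_injective _ this
    have hx : ∀ j : ℕ, j < n → hex.choose.1 j = x.1 j := fun j hj => hex.choose_spec ⟨j, hj⟩
    have e1 := (g.2.1.2 hex.choose x hx i hi).symm.trans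
      (congrFun h2 ⟨i, hi⟩)
    exact e1.trans (g'.2.1.2 hex.choose x hx i hi)
  · exact (g.2.1.1 x i hi).trans (g'.2.1.1 x i hi).symm

theorem finite_gcircN (n : ℕ) (A : Set B.Path) : Finite ↥(B.GcircN n A) := by
  have := finite_level B n
  refine Finite.of_injective
    (fun g : ↥(B.GcircN n A) => (⟨g.1.1, g.2.1⟩ : ↥(B.level n))) ?_
  intro g g' h
  have h2 := congrArg (fun z : ↥(B.level n) => z.1) h
  exact Subtype.ext (Subtype.ext h2)

end Scratch3
section Scratch4
variable (B : BratteliDiagram)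

def castE {i j : ℕ} (h : i = j) (e : B.E i) : B.E j := h ▸ e

theorem castE_eq_of_heq {i j : ℕ} (h : i = j) (e : B.E i) (e' : B.E j)
    (he : HEq e e') : castE B h e = e' := by subst h; exact eq_of_heq he

def spliceFun (x : ∀ i, B.E i) (m L : ℕ) (s : B.Seg m L) : ∀ i, B.E i :=
  fun i => if h : m ≤ i ∧ i ≤ m + L then
    castE B (show m + (i - m) = i by omega) (s.1 ⟨i - m, by omega⟩) else x i

theorem spliceFun_lo (x : ∀ i, B.E i) (m L : ℕ) (s : B.Seg m L) (i : ℕ) (hi : i < m) :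
    spliceFun B x m L s i = x i := dif_neg (by omega)

theorem spliceFun_hi (x : ∀ i, B.E i) (m L : ℕ) (s : B.Seg m L) (i : ℕ) (hi : m + L < i) :
    spliceFun B x m L s i = x i := dif_neg (by omega)

theorem spliceFun_eval (x : ∀ i, B.E i) (m L : ℕ) (s : B.Seg m L) (j : ℕ) (hj : j ≤ L) :
    spliceFun B x m L s (m + j) = s.1 ⟨j, by omega⟩ := by
  rw [spliceFun, dif_pos ⟨Nat.le_add_right m j, by omega⟩]
  refine castE_eq_of_heq B _ _ _ (congr_arg_heq s.1 (Fin.ext ?_))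
  simp

theorem spliceFun_valid (x : B.Path) (m L : ℕ) (s : B.Seg m L)
    (h0 : B.src m (s.1 ⟨0, Nat.succ_pos L⟩) = B.src m (x.1 m))
    (h1 : B.rng (m + L) (s.1 ⟨L, Nat.lt_succ_self L⟩) = B.rng (m + L) (x.1 (m + L))) :
    ∀ i, B.rng i (spliceFun B x.1 m L s i) = B.src (i + 1) (spliceFun B x.1 m L s (i + 1)) := by
  intro i
  rcases lt_or_ge (i + 1) m with h | h
  · rw [spliceFun_lo B x.1 m L s i (by omega), spliceFun_lo B x.1 m L s (i+1) h]
    exact x.2 i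
  rcases eq_or_lt_of_le h with h' | h'
  · -- i + 1 = m
    subst h'
    rw [spliceFun_lo B x.1 _ L s i (by omega)]
    have e0 : spliceFun B x.1 (i+1) L s (i+1) = s.1 ⟨0, Nat.succ_pos L⟩ :=
      spliceFun_eval B x.1 (i+1) L s 0 (by omega)
    rw [e0, h0]
    exact x.2 i
  · -- m ≤ i
    have hmi : m ≤ i := by omega
    obtain ⟨j, rfl⟩ : ∃ j, i = m + j := ⟨i - m, by omega⟩
    rcases lt_or_ge j L with hj | hj
    · have e1 : spliceFun B x.1 m L s (m + j) = s.1 ⟨j, by omega⟩ :=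
        spliceFun_eval B x.1 m L s j (by omega)
      have e2 : spliceFun B x.1 m L s (m + j + 1) = s.1 ⟨j + 1, by omega⟩ :=
        spliceFun_eval B x.1 m L s (j + 1) (by omega)
      rw [e1, e2]
      exact s.2 j hj
    rcases eq_or_lt_of_le hj with hj' | hj'
    · -- j = L
      subst hj'
      have e1 : spliceFun B x.1 m L s (m + L) = s.1 ⟨L, Nat.lt_succ_self L⟩ :=
        spliceFun_eval B x.1 m L s L le_rfl
      rw [e1, spliceFun_hi B x.1 m L s (m + L + 1) (by omega), h1]
      exact x.2 (m + L)
    · rw [spliceFun_hi B x.1 m L s (m + j) (by omega),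
        spliceFun_hi B x.1 m L s (m + j + 1) (by omega)]
      exact x.2 (m + j)

def splicePath (x : B.Path) (m L : ℕ) (s : B.Seg m L)
    (h0 : B.src m (s.1 ⟨0, Nat.succ_pos L⟩) = B.src m (x.1 m))
    (h1 : B.rng (m + L) (s.1 ⟨L, Nat.lt_succ_self L⟩) = B.rng (m + L) (x.1 (m + L))) :
    B.Path := ⟨spliceFun B x.1 m L s, spliceFun_valid B x m L s h0 h1⟩

end Scratch4
section Scratch5
variable (B : BratteliDiagram)

theorem exists_double (heven : B.IsEven) (m : ℕ) (x : B.Path) :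
    ∃ n, m < n ∧ ∃ y : B.Path, y ≠ x ∧ (∀ i, i < m → y.1 i = x.1 i) ∧
      (∀ i, n ≤ i → y.1 i = x.1 i) := by
  obtain ⟨L, hL⟩ := heven m
  obtain ⟨hpos, hev⟩ := hL (B.src m (x.1 m)) (B.rng (m + L) (x.1 (m + L)))
  set T := { f : B.Seg m L //
      B.src m (f.1 ⟨0, by omega⟩) = B.src m (x.1 m) ∧
      B.rng (m + L) (f.1 ⟨L, by omega⟩) = B.rng (m + L) (x.1 (m + L)) } with hT
  have hcard : 0 < Nat.card T ∧ Even (Nat.card T) := ⟨hpos, hev⟩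
  have hfin : Finite T := Nat.finite_of_card_ne_zero hcard.1.ne'
  have h2 : 1 < Nat.card T := by
    obtain ⟨c, hc⟩ := hcard.2
    omega
  have hnt : Nontrivial T := Finite.one_lt_card_iff_nontrivial.mp h2
  have hxsval : ∀ (i : ℕ) (hi : i < L),
      B.rng (m + i) (x.1 (m + i)) = B.src (m + (i + 1)) (x.1 (m + (i + 1))) :=
    fun i _ => x.2 (m + i)
  set xs : T := ⟨⟨fun i : Fin (L+1) => x.1 (m + (i : ℕ)), hxsval⟩, rfl, rfl⟩ with hxs
  obtain ⟨s, hs⟩ := exists_ne xs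
  set y : B.Path := splicePath B x m L s.1 s.2.1 s.2.2 with hy
  have hidx : ∃ idx : Fin (L + 1), s.1.1 idx ≠ x.1 (m + (idx : ℕ)) := by
    by_contra hforall
    push_neg at hforall
    exact hs (Subtype.ext (Subtype.ext (funext hforall)))
  obtain ⟨idx, hidx⟩ := hidx
  refine ⟨m + L + 1, by omega, y, ?_, ?_, ?_⟩
  · intro hyx
    apply hidx
    have h2 : y.1 (m + (idx : ℕ)) = s.1.1 idx :=
      spliceFun_eval B x.1 m L s.1 (idx : ℕ) (by omega)
    rw [← h2, hyx]
  · exact fun i hi => spliceFun_lo B x.1 m L s.1 i hi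
  · exact fun i hi => spliceFun_hi B x.1 m L s.1 i (by omega)

theorem exists_many (heven : B.IsEven) (t : ℕ) : ∀ (m : ℕ) (x : B.Path), ∃ n, m ≤ n ∧ ∃ S : Finset B.Path,
    2 ^ t ≤ S.card ∧ ∀ y ∈ S, (∀ i, i < m → y.1 i = x.1 i) ∧ (∀ i, n ≤ i → y.1 i = x.1 i) := by
  classical
  induction t with
  | zero =>
    intro m x
    exact ⟨m, le_rfl, {x}, by simp, by simp⟩
  | succ t ih =>
    intro m x
    obtain ⟨n₁, hn₁, y, hyx, hylo, hyhi⟩ := exists_double B heven m x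
    obtain ⟨n₂, hn₂, Sx, hSx, hSxy⟩ := ih n₁ x
    obtain ⟨n₃, hn₃, Sy, hSy, hSyy⟩ := ih n₁ y
    have hdisj : Disjoint Sx Sy := by
      obtain ⟨i₀, hi₀⟩ : ∃ i₀, i₀ < n₁ ∧ y.1 i₀ ≠ x.1 i₀ := by
        by_contra hforall
        push_neg at hforall
        apply hyx
        refine Subtype.ext (funext fun i => ?_)
        rcases lt_or_ge i n₁ with h | h
        · by_contra hne
          exact hne (hforall i h)
        · exact hyhi i h
      rw [Finset.disjoint_left]
      intro z hzx hzy
      have h1 : z.1 i₀ = x.1 i₀ := (hSxy z hzx).1 i₀ hi₀.1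
      have h2 : z.1 i₀ = y.1 i₀ := (hSyy z hzy).1 i₀ hi₀.1
      exact hi₀.2 (h2 ▸ h1)
    refine ⟨max n₂ n₃, by omega, Sx ∪ Sy, ?_, ?_⟩
    · rw [Finset.card_union_of_disjoint hdisj, pow_succ]
      omega
    · intro z hz
      rcases Finset.mem_union.mp hz with hz | hz
      · exact ⟨fun i hi => (hSxy z hz).1 i (by omega),
          fun i hi => (hSxy z hz).2 i (by omega)⟩
      · refine ⟨fun i hi => ((hSyy z hz).1 i (by omega)).trans (hylo i hi),
          fun i hi => ?_⟩
        exact ((hSyy z hz).2 i (by omega)).trans (hyhi i (by omega))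

end Scratch5
section Scratch6
open scoped Classical
variable (B : BratteliDiagram)

def replaceFun (y z : B.Path) (n : ℕ) : ∀ i, B.E i := fun i => if i < n then y.1 i else z.1 i

theorem replaceFun_valid (x y z : B.Path) (n : ℕ) (hxy : ∀ i, n ≤ i → x.1 i = y.1 i)
    (hz : ∀ i, i < n → z.1 i = x.1 i) :
    ∀ i, B.rng i (replaceFun B y z n i) = B.src (i + 1) (replaceFun B y z n (i + 1)) := by
  intro i
  unfold replaceFun
  rcases lt_or_ge (i + 1) n with h | h
  · rw [if_pos (by omega), if_pos h]
    exact y.2 i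
  rcases lt_or_ge i n with h' | h'
  · -- i < n ≤ i + 1, junction
    rw [if_pos h', if_neg (by omega)]
    calc B.rng i (y.1 i) = B.src (i+1) (y.1 (i+1)) := y.2 i
    _ = B.src (i+1) (x.1 (i+1)) := by rw [hxy (i+1) h]
    _ = B.rng i (x.1 i) := (x.2 i).symm
    _ = B.rng i (z.1 i) := by rw [hz i h']
    _ = B.src (i+1) (z.1 (i+1)) := z.2 i
  · rw [if_neg (by omega), if_neg (by omega)]
    exact z.2 i

def replacePath (x y z : B.Path) (n : ℕ) (hxy : ∀ i, n ≤ i → x.1 i = y.1 i)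
    (hz : ∀ i, i < n → z.1 i = x.1 i) : B.Path :=
  ⟨replaceFun B y z n, replaceFun_valid B x y z n hxy hz⟩

/-- The swap of the cylinders of `x` and `y` (which agree from level `n` on). -/
def swapFun (x y : B.Path) (n : ℕ) (hxy : ∀ i, n ≤ i → x.1 i = y.1 i) : B.Path → B.Path :=
  fun z =>
    if hz : ∀ i, i < n → z.1 i = x.1 i then replacePath B x y z n hxy hz
    else if hz' : ∀ i, i < n → z.1 i = y.1 i then
      replacePath B y x z n (fun i hi => (hxy i hi).symm) hz'
    else z

theorem swapFun_coord (x y : B.Path) (n : ℕ) (hxy) (z : B.Path) (i : ℕ) :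
    (swapFun B x y n hxy z).1 i =
      (if (∀ j, j < n → z.1 j = x.1 j) then (if i < n then y.1 i else z.1 i)
       else if (∀ j, j < n → z.1 j = y.1 j) then (if i < n then x.1 i else z.1 i)
       else z.1 i) := by
  unfold swapFun
  split
  · rfl
  · split
    · rfl
    · rfl

theorem swapFun_hi (x y : B.Path) (n : ℕ) (hxy) (z : B.Path) (i : ℕ) (hi : n ≤ i) :
    (swapFun B x y n hxy z).1 i = z.1 i := by
  rw [swapFun_coord]
  split
  · rw [if_neg (by omega)]
  · split
    · rw [if_neg (by omega)]
    · rfl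

theorem swapFun_involutive (x y : B.Path) (n : ℕ) (hxy) :
    Function.Involutive (swapFun B x y n hxy) := by
  intro z
  refine Subtype.ext (funext fun i => ?_)
  rw [swapFun_coord]
  by_cases hzx : ∀ j, j < n → z.1 j = x.1 j
  · -- σ z has head y
    have hhead : ∀ j, j < n → (swapFun B x y n hxy z).1 j = y.1 j := by
      intro j hj
      rw [swapFun_coord, if_pos hzx, if_pos hj]
    by_cases hyx : ∀ j, j < n → y.1 j = x.1 j
    · rw [if_pos (fun j hj => (hhead j hj).trans (hyx j hj))]
      split
      · next h => exact ((hzx i h).trans (hyx i h).symm).symm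
      · next h => exact swapFun_hi B x y n hxy z i (by omega)
    · rw [if_neg (fun hc => hyx fun j hj => (hhead j hj).symm.trans (hc j hj)),
        if_pos hhead]
      split
      · next h => exact (hzx i h).symm
      · next h => exact swapFun_hi B x y n hxy z i (by omega)
  · by_cases hzy : ∀ j, j < n → z.1 j = y.1 j
    · -- σ z has head x
      have hhead : ∀ j, j < n → (swapFun B x y n hxy z).1 j = x.1 j := by
        intro j hj
        rw [swapFun_coord, if_neg hzx, if_pos hzy, if_pos hj]
      rw [if_pos hhead]
      split
      · next h => exact (hzy i h).symm
      · next h => exact swapFun_hi B x y n hxy z i (by omega)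
    · -- σ z = z
      have hz : swapFun B x y n hxy z = z := by
        unfold swapFun
        rw [dif_neg hzx, dif_neg hzy]
      rw [hz, if_neg hzx, if_neg hzy]

def swapPerm (x y : B.Path) (n : ℕ) (hxy : ∀ i, n ≤ i → x.1 i = y.1 i) :
    Equiv.Perm B.Path := (swapFun_involutive B x y n hxy).toPerm

theorem swapPerm_apply (x y : B.Path) (n : ℕ) (hxy) (z : B.Path) :
    swapPerm B x y n hxy z = swapFun B x y n hxy z := rfl

theorem swapPerm_isLevel (x y : B.Path) (n : ℕ) (hxy) : B.IsLevel n (swapPerm B x y n hxy) := by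
  constructor
  · exact fun z i hi => swapFun_hi B x y n hxy z i hi
  · intro z w hzw i hi
    rw [swapPerm_apply, swapPerm_apply, swapFun_coord, swapFun_coord]
    have hcx : (∀ j, j < n → z.1 j = x.1 j) ↔ (∀ j, j < n → w.1 j = x.1 j) :=
      ⟨fun h j hj => (hzw j hj).symm.trans (h j hj), fun h j hj => (hzw j hj).trans (h j hj)⟩
    have hcy : (∀ j, j < n → z.1 j = y.1 j) ↔ (∀ j, j < n → w.1 j = y.1 j) :=
      ⟨fun h j hj => (hzw j hj).symm.trans (h j hj), fun h j hj => (hzw j hj).trans (h j hj)⟩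
    by_cases h1 : ∀ j, j < n → z.1 j = x.1 j
    · rw [if_pos h1, if_pos (hcx.mp h1), if_pos hi, if_pos hi]
    · rw [if_neg h1, if_neg (fun h => h1 (hcx.mpr h))]
      by_cases h2 : ∀ j, j < n → z.1 j = y.1 j
      · rw [if_pos h2, if_pos (hcy.mp h2), if_pos hi, if_pos hi]
      · rw [if_neg h2, if_neg (fun h => h2 (hcy.mpr h))]
        exact hzw i hi

theorem swapPerm_mem_level (x y : B.Path) (n : ℕ) (hxy) : swapPerm B x y n hxy ∈ B.level n := by
  refine ⟨swapPerm_isLevel B x y n hxy, ?_⟩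
  have hinv : (swapPerm B x y n hxy)⁻¹ = swapPerm B x y n hxy := by
    apply Equiv.ext
    intro z
    have := (swapFun_involutive B x y n hxy) z
    calc (swapPerm B x y n hxy)⁻¹ z
        = (swapPerm B x y n hxy)⁻¹ (swapPerm B x y n hxy (swapFun B x y n hxy z)) := by
          rw [swapPerm_apply, this]
      _ = swapFun B x y n hxy z := by rw [← Equiv.Perm.mul_apply, inv_mul_cancel]; rfl
  rw [hinv]
  exact swapPerm_isLevel B x y n hxy

theorem swapPerm_apply_left (x y : B.Path) (n : ℕ) (hxy) : swapPerm B x y n hxy x = y := by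
  rw [swapPerm_apply]
  unfold swapFun
  rw [dif_pos (fun j _ => rfl)]
  refine Subtype.ext (funext fun i => ?_)
  show (if i < n then y.1 i else x.1 i) = y.1 i
  split
  · rfl
  · next h => exact hxy i (by omega)

end Scratch6
section Scratch7
variable (B : BratteliDiagram)

theorem mem_gcirc_iff (g : ↥B.fullGroup) (A : Set B.Path) :
    g ∈ B.Gcirc A ↔ ∀ a ∈ A, g • a = a := by
  simp [BratteliDiagram.Gcirc, Subgroup.mem_iInf, MulAction.mem_stabilizer_iff]

theorem swapPerm_fixes (x y : B.Path) (n : ℕ) (hxy) (A : Set B.Path) (m : ℕ) (hm : m ≤ n)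
    (hdet : ∀ u v : B.Path, (∀ i, i < m → u.1 i = v.1 i) → (u ∈ A ↔ v ∈ A))
    (hx : x ∉ A) (hylo : ∀ i, i < m → y.1 i = x.1 i) (a : B.Path) (ha : a ∈ A) :
    swapPerm B x y n hxy a = a := by
  rw [swapPerm_apply]
  unfold swapFun
  rw [dif_neg, dif_neg]
  · intro hza
    exact hx ((hdet a x fun i hi => (hza i (by omega)).trans (hylo i hi)).mp ha)
  · intro hza
    exact hx ((hdet a x fun i hi => hza i (by omega)).mp ha)

theorem gcircN_mono (A : Set B.Path) {n n' : ℕ} (h : n ≤ n') :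
    B.GcircN n A ≤ B.GcircN n' A :=
  inf_le_inf (Subgroup.comap_mono (B.level_mono h)) le_rfl

theorem orbit_lower_bound (heven : B.IsEven) (A : Set B.Path) (m : ℕ)
    (hdet : ∀ u v : B.Path, (∀ i, i < m → u.1 i = v.1 i) → (u ∈ A ↔ v ∈ A))
    {k : ℕ} (w : Fin k → B.Path) (i₀ : Fin k) (hw : w i₀ ∉ A) (N : ℕ) :
    ∃ n₀, ∀ n, n₀ ≤ n → N ≤ Nat.card (MulAction.orbit ↥(B.GcircN n A) w) := by
  classical
  set x := w i₀ with hx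
  obtain ⟨t, ht⟩ : ∃ t, N ≤ 2 ^ t := ⟨N, Nat.le_of_lt (Nat.lt_two_pow_self (n := N))⟩
  obtain ⟨n₁, hn₁, S, hScard, hS⟩ := exists_many B heven t m x
  refine ⟨max n₁ m, fun n hn => ?_⟩
  have hmn : m ≤ n := le_trans (le_max_right _ _) hn
  have hn₁n : n₁ ≤ n := le_trans (le_max_left _ _) hn
  -- for each y' ∈ S, a swap element of GcircN n A sending x to y'
  have hfin : Finite ↥(B.GcircN n A) := finite_gcircN B n A
  have horbfin : (MulAction.orbit ↥(B.GcircN n A) w).Finite := Set.finite_range _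
  set F : B.Path → (Fin k → B.Path) := fun y' =>
    if h : (∀ i, i < m → y'.1 i = x.1 i) ∧ (∀ i, n ≤ i → y'.1 i = x.1 i) then
      (fun j => swapPerm B x y' n (fun i hi => (h.2 i hi).symm) (w j))
    else w with hF
  have hmemS : ∀ y' ∈ S, (∀ i, i < m → y'.1 i = x.1 i) ∧ (∀ i, n ≤ i → y'.1 i = x.1 i) :=
    fun y' hy' => ⟨(hS y' hy').1, fun i hi => (hS y' hy').2 i (by omega)⟩
  have hFi₀ : ∀ y' ∈ S, F y' i₀ = y' := by
    intro y' hy'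
    rw [hF]
    simp only [dif_pos (hmemS y' hy')]
    exact swapPerm_apply_left B x y' n _
  have hForb : ∀ y' ∈ S, F y' ∈ MulAction.orbit ↥(B.GcircN n A) w := by
    intro y' hy'
    have h := hmemS y' hy'
    set hxy' : ∀ i, n ≤ i → x.1 i = y'.1 i := fun i hi => (h.2 i hi).symm
    set σ : Equiv.Perm B.Path := swapPerm B x y' n hxy' with hσ
    have hσlevel : σ ∈ B.level n := swapPerm_mem_level B x y' n hxy'
    set g : ↥B.fullGroup := ⟨σ, ⟨n, hσlevel⟩⟩ with hg
    have hgmem : g ∈ B.GcircN n A := by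
      rw [BratteliDiagram.GcircN, Subgroup.mem_inf]
      refine ⟨?_, ?_⟩
      · rw [BratteliDiagram.levelIn, Subgroup.mem_comap]
        exact hσlevel
      · rw [mem_gcirc_iff]
        intro a ha
        exact swapPerm_fixes B x y' n hxy' A m hmn hdet hw h.1 a ha
    refine ⟨⟨g, hgmem⟩, ?_⟩
    funext j
    rw [hF]
    simp only [dif_pos h]
    rfl
  have hinj : Set.InjOn F ↑S := by
    intro a ha b hb hab
    have : F a i₀ = F b i₀ := by rw [hab]
    rwa [hFi₀ a ha, hFi₀ b hb] at this
  calc (N : ℕ) ≤ 2 ^ t := ht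
    _ ≤ S.card := hScard
    _ = (S.image F).card := (Finset.card_image_of_injOn hinj).symm
    _ = (↑(S.image F) : Set (Fin k → B.Path)).ncard := (Set.ncard_coe_finset _).symm
    _ ≤ (MulAction.orbit ↥(B.GcircN n A) w).ncard := by
        refine Set.ncard_le_ncard ?_ horbfin
        intro z hz
        obtain ⟨y', hy', rfl⟩ := Finset.mem_image.mp hz
        exact hForb y' hy'
    _ = Nat.card (MulAction.orbit ↥(B.GcircN n A) w) := (Nat.card_coe_set_eq _).symm

end Scratch7
section Scratch8
variable (B : BratteliDiagram)

theorem isOpen_cyl (x : B.Path) (n : ℕ) : IsOpen {z : B.Path | ∀ i, i < n → z.1 i = x.1 i} := by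
  have : {z : B.Path | ∀ i, i < n → z.1 i = x.1 i}
      = ⋂ i ∈ Finset.range n, (fun z : B.Path => z.1 i) ⁻¹' {x.1 i} := by
    ext z; simp [Set.mem_iInter]
  rw [this]
  exact isOpen_biInter_finset fun i _ =>
    (continuous_coord B i).isOpen_preimage _ (isOpen_discrete _)

theorem measurable_fix_path (g : ↥B.fullGroup) : MeasurableSet {x : B.Path | g • x = x} := by
  obtain ⟨n, hn⟩ := g.2
  have hopen : IsOpen {x : B.Path | g • x = x} := by
    rw [isOpen_iff_forall_mem_open]
    intro x hx
    refine ⟨{z : B.Path | ∀ i, i < n → z.1 i = x.1 i}, ?_, isOpen_cyl B x n, fun i _ => rfl⟩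
    intro z hz
    have hgz : g.1 z = z := by
      refine Subtype.ext (funext fun i => ?_)
      rcases lt_or_ge i n with hi | hi
      · have h1 : (g.1 z).1 i = (g.1 x).1 i := hn.1.2 z x hz i hi
        have h2 : g.1 x = x := hx
        rw [h1, h2]
        exact (hz i hi).symm
      · exact hn.1.1 z i hi
    exact hgz
  exact hopen.measurableSet

theorem measurable_fix_tuple {k : ℕ} (g : ↥B.fullGroup) :
    MeasurableSet {y : Fin k → B.Path | g • y = y} := by
  have : {y : Fin k → B.Path | g • y = y}
      = ⋂ i, (fun y : Fin k → B.Path => y i) ⁻¹' {x : B.Path | g • x = x} := by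
    ext y
    simp only [Set.mem_setOf_eq, Set.mem_iInter, Set.mem_preimage, funext_iff]
    rfl
  rw [this]
  exact MeasurableSet.iInter fun i => (measurable_pi_apply i) (measurable_fix_path B g)

end Scratch8
section Scratch9
variable (B : BratteliDiagram)

theorem sum_indicator_eq_stab (n : ℕ) (A : Set B.Path) {k : ℕ}
    [Fintype ↥(B.GcircN n A)] (y : Fin k → B.Path) :
    ∑ g : ↥(B.GcircN n A),
        Set.indicator {z : Fin k → B.Path | (g : ↥B.fullGroup) • z = z}
          (fun _ => (1:ℝ)) y
      = (Nat.card (MulAction.stabilizer ↥(B.GcircN n A) y) : ℝ) := by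
  classical
  have h1 : ∀ g : ↥(B.GcircN n A),
      Set.indicator {z : Fin k → B.Path | (g : ↥B.fullGroup) • z = z} (fun _ => (1:ℝ)) y
        = if (g : ↥B.fullGroup) • y = y then (1:ℝ) else 0 := by
    intro g
    simp [Set.indicator_apply, Set.mem_setOf_eq]
  rw [Finset.sum_congr rfl fun g _ => h1 g, Finset.sum_boole]
  norm_cast
  rw [Nat.card_eq_fintype_card, Fintype.card_subtype]
  exact congrArg Finset.card (Finset.filter_congr fun x _ => by
    rw [MulAction.mem_stabilizer_iff]
    exact Iff.rfl)

set_option maxHeartbeats 1000000 in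
theorem stab_div_eq_inv_orbit (n : ℕ) (A : Set B.Path) {k : ℕ}
    [Fintype ↥(B.GcircN n A)] (y : Fin k → B.Path) :
    (Nat.card (MulAction.stabilizer ↥(B.GcircN n A) y) : ℝ) / (Nat.card ↥(B.GcircN n A) : ℝ)
      = ((Nat.card (MulAction.orbit ↥(B.GcircN n A) y) : ℝ))⁻¹ := by
  classical
  set H := B.GcircN n A
  haveI hfinorb : Finite ↥(MulAction.orbit ↥H y) := (Set.finite_range fun g : ↥H => g • y).to_subtype
  haveI : Fintype ↥(MulAction.orbit ↥H y) := Fintype.ofFinite _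
  have hos := MulAction.card_orbit_mul_card_stabilizer_eq_card_group ↥H y
  have h1 : (0:ℝ) < Fintype.card (MulAction.orbit ↥H y) := by
    have : Nonempty (MulAction.orbit ↥H y) := ⟨⟨y, MulAction.mem_orbit_self y⟩⟩
    exact_mod_cast Fintype.card_pos
  have h2 : (0:ℝ) < Fintype.card ↥H := by exact_mod_cast Fintype.card_pos
  rw [Nat.card_eq_fintype_card, Nat.card_eq_fintype_card, Nat.card_eq_fintype_card, ← hos]
  push_cast
  field_simp

end Scratch9
section Scratch10
variable (B : BratteliDiagram)

def phiFn (n : ℕ) (A : Set B.Path) {k : ℕ} : (Fin k → B.Path) → ℝ :=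
  fun y => ((Nat.card (MulAction.orbit ↥(B.GcircN n A) y) : ℝ))⁻¹

theorem phiFn_eq_sum (n : ℕ) (A : Set B.Path) {k : ℕ} [Fintype ↥(B.GcircN n A)]
    (y : Fin k → B.Path) :
    phiFn B n A y = (∑ g : ↥(B.GcircN n A),
        Set.indicator {z : Fin k → B.Path | (g : ↥B.fullGroup) • z = z} (fun _ => (1:ℝ)) y)
      / (Nat.card ↥(B.GcircN n A) : ℝ) := by
  rw [sum_indicator_eq_stab, stab_div_eq_inv_orbit]
  rfl

theorem phiFn_integrable (n : ℕ) (A : Set B.Path) {k : ℕ}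
    (μbar : Measure (Fin k → B.Path)) [IsProbabilityMeasure μbar] :
    Integrable (phiFn B n A) μbar := by
  classical
  haveI : Fintype ↥(B.GcircN n A) := @Fintype.ofFinite _ (finite_gcircN B n A)
  have : phiFn B n A = fun y : Fin k → B.Path => (∑ g : ↥(B.GcircN n A),
      Set.indicator {z : Fin k → B.Path | (g : ↥B.fullGroup) • z = z} (fun _ => (1:ℝ)) y)
      / (Nat.card ↥(B.GcircN n A) : ℝ) := funext fun y => phiFn_eq_sum B n A y
  rw [this]
  apply Integrable.div_const
  apply integrable_finset_sum
  intro g _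
  exact (integrable_const (1:ℝ)).indicator (measurable_fix_tuple B g.1)

theorem avg_eq_integral (n : ℕ) (A : Set B.Path) {k : ℕ}
    (μbar : Measure (Fin k → B.Path)) [IsProbabilityMeasure μbar] :
    (∑ᶠ g : ↥(B.GcircN n A),
        (μbar {y : Fin k → B.Path | (g : ↥B.fullGroup) • y = y}).toReal)
      / (Nat.card ↥(B.GcircN n A) : ℝ)
    = ∫ y, phiFn B n A y ∂μbar := by
  classical
  haveI : Fintype ↥(B.GcircN n A) := @Fintype.ofFinite _ (finite_gcircN B n A)
  rw [finsum_eq_sum_of_fintype]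
  have h1 : ∀ g : ↥(B.GcircN n A),
      (μbar {y : Fin k → B.Path | (g : ↥B.fullGroup) • y = y}).toReal
        = ∫ y, Set.indicator {z : Fin k → B.Path | (g : ↥B.fullGroup) • z = z}
            (fun _ => (1:ℝ)) y ∂μbar :=
    fun g => (integral_indicator_one (measurable_fix_tuple B g.1)).symm
  rw [Finset.sum_congr rfl fun g _ => h1 g,
    ← integral_finset_sum _ fun g _ =>
      (integrable_const (1:ℝ)).indicator (measurable_fix_tuple B g.1),
    ← integral_div]
  refine integral_congr_ae (Filter.Eventually.of_forall fun y => ?_)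
  exact (phiFn_eq_sum B n A y).symm

theorem phiFn_nonneg (n : ℕ) (A : Set B.Path) {k : ℕ} (y : Fin k → B.Path) :
    0 ≤ phiFn B n A y := inv_nonneg.mpr (Nat.cast_nonneg _)

theorem phiFn_le_one (n : ℕ) (A : Set B.Path) {k : ℕ} (y : Fin k → B.Path) :
    phiFn B n A y ≤ 1 := by
  haveI : Finite ↥(B.GcircN n A) := finite_gcircN B n A
  haveI : Finite ↥(MulAction.orbit ↥(B.GcircN n A) y) :=
    (Set.finite_range fun g : ↥(B.GcircN n A) => g • y).to_subtype
  haveI : Nonempty ↥(MulAction.orbit ↥(B.GcircN n A) y) :=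
    ⟨⟨y, MulAction.mem_orbit_self y⟩⟩
  have h1 : 1 ≤ (Nat.card (MulAction.orbit ↥(B.GcircN n A) y) : ℝ) := by
    exact_mod_cast Nat.card_pos
  exact inv_le_one_of_one_le₀ h1

theorem orbit_card_mono (A : Set B.Path) {k : ℕ} (y : Fin k → B.Path) {n n' : ℕ} (h : n ≤ n') :
    Nat.card (MulAction.orbit ↥(B.GcircN n A) y)
      ≤ Nat.card (MulAction.orbit ↥(B.GcircN n' A) y) := by
  haveI : Finite ↥(B.GcircN n' A) := finite_gcircN B n' A
  have hsub : MulAction.orbit ↥(B.GcircN n A) y ⊆ MulAction.orbit ↥(B.GcircN n' A) y := by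
    intro z hz
    obtain ⟨g, hg⟩ := MulAction.mem_orbit_iff.mp hz
    exact MulAction.mem_orbit_iff.mpr ⟨⟨g.1, gcircN_mono B A h g.2⟩, hg⟩
  have hfin : (MulAction.orbit ↥(B.GcircN n' A) y).Finite :=
    Set.finite_range fun g : ↥(B.GcircN n' A) => g • y
  rw [Nat.card_coe_set_eq, Nat.card_coe_set_eq]
  exact Set.ncard_le_ncard hsub hfin

theorem phiFn_antitone (A : Set B.Path) {k : ℕ} (y : Fin k → B.Path) :
    Antitone fun n => phiFn B n A y := by
  intro n n' h
  have hpos : (0:ℝ) < (Nat.card (MulAction.orbit ↥(B.GcircN n A) y) : ℝ) := by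
    haveI : Finite ↥(B.GcircN n A) := finite_gcircN B n A
    haveI : Finite ↥(MulAction.orbit ↥(B.GcircN n A) y) :=
      (Set.finite_range fun g : ↥(B.GcircN n A) => g • y).to_subtype
    haveI : Nonempty ↥(MulAction.orbit ↥(B.GcircN n A) y) :=
      ⟨⟨y, MulAction.mem_orbit_self y⟩⟩
    exact_mod_cast Nat.card_pos
  exact inv_anti₀ hpos (by exact_mod_cast orbit_card_mono B A y h)

theorem phiFn_eq_one_of_mem (n : ℕ) (A : Set B.Path) {k : ℕ} (y : Fin k → B.Path)
    (hy : ∀ i, y i ∈ A) : phiFn B n A y = 1 := by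
  have horb : MulAction.orbit ↥(B.GcircN n A) y = {y} := by
    apply Set.eq_singleton_iff_unique_mem.mpr
    refine ⟨MulAction.mem_orbit_self y, ?_⟩
    intro z hz
    obtain ⟨g, hg⟩ := MulAction.mem_orbit_iff.mp hz
    have hgc : (g : ↥B.fullGroup) ∈ B.Gcirc A := by
      have h2 : (g : ↥B.fullGroup) ∈ B.levelIn n ⊓ B.Gcirc A := g.2
      rw [Subgroup.mem_inf] at h2
      exact h2.2
    rw [← hg]
    funext i
    show (g : ↥B.fullGroup) • y i = y i
    exact (mem_gcirc_iff B _ A).mp hgc (y i) (hy i)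
  rw [phiFn, horb]
  simp [Nat.card_coe_set_eq]

theorem phiFn_tendsto_zero (heven : B.IsEven) (A : Set B.Path) (m : ℕ)
    (hdet : ∀ u v : B.Path, (∀ i, i < m → u.1 i = v.1 i) → (u ∈ A ↔ v ∈ A))
    {k : ℕ} (y : Fin k → B.Path) (i₀ : Fin k) (hy : y i₀ ∉ A) :
    Tendsto (fun n => phiFn B n A y) atTop (nhds 0) := by
  rw [Metric.tendsto_atTop]
  intro ε hε
  obtain ⟨N, hN⟩ := exists_nat_gt ε⁻¹
  obtain ⟨n₀, hn₀⟩ := orbit_lower_bound B heven A m hdet y i₀ hy (N + 1)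
  refine ⟨n₀, fun n hn => ?_⟩
  have hcard := hn₀ n hn
  have hNpos : (0:ℝ) < (N:ℝ) + 1 := by positivity
  have h2 : phiFn B n A y ≤ ((N:ℝ) + 1)⁻¹ := by
    apply inv_anti₀ hNpos
    exact_mod_cast hcard
  have h3 : ((N:ℝ) + 1)⁻¹ < ε := by
    rw [inv_eq_one_div, div_lt_iff₀ hNpos]
    have h5 : 1 < ε * N := by
      have := mul_lt_mul_of_pos_left hN hε
      rwa [mul_inv_cancel₀ hε.ne'] at this
    nlinarith
  rw [Real.dist_eq, sub_zero, abs_of_nonneg (phiFn_nonneg B n A y)]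
  exact lt_of_le_of_lt h2 h3

end Scratch10

/-- for a proper clopen set `A` and an invariant probability measure `μ̄` on `X^k`,
the averages over `G°_n(A) = G_n ∩ G°(A)` of the measures of the fixed point sets converge
monotonically to `μ̄(A^k)`. -/
theorem average_fixed_points_tendsto_Ak (B : BratteliDiagram)
    (hsimple : B.IsSimple) (heven : B.IsEven)
    (A : Set B.Path) (hA : IsClopen A) (hAne : A ≠ Set.univ)
    (k : ℕ) (μbar : Measure (Fin k → B.Path)) (hprob : IsProbabilityMeasure μbar)
    (hinv : MeasInv ↥B.fullGroup μbar) :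
    Filter.Tendsto
      (fun n : ℕ =>
        (∑ᶠ g : ↥(B.GcircN n A),
            (μbar {y : Fin k → B.Path | (g : ↥B.fullGroup) • y = y}).toReal)
          / (Nat.card ↥(B.GcircN n A) : ℝ))
      Filter.atTop
      (nhds ((μbar {y : Fin k → B.Path | ∀ i, y i ∈ A}).toReal)) ∧
    Antitone (fun n : ℕ =>
        (∑ᶠ g : ↥(B.GcircN n A),
            (μbar {y : Fin k → B.Path | (g : ↥B.fullGroup) • y = y}).toReal)
          / (Nat.card ↥(B.GcircN n A) : ℝ)) := by
  classical
  haveI := hprob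
  obtain ⟨m, hdet⟩ := exists_level_determines B hA
  have hT : MeasurableSet {y : Fin k → B.Path | ∀ i, y i ∈ A} := by
    have : {y : Fin k → B.Path | ∀ i, y i ∈ A}
        = ⋂ i, (fun y : Fin k → B.Path => y i) ⁻¹' A := by
      ext y; simp [Set.mem_iInter]
    rw [this]
    exact MeasurableSet.iInter fun i => (measurable_pi_apply i) hA.isOpen.measurableSet
  have hAvg : (fun n : ℕ =>
      (∑ᶠ g : ↥(B.GcircN n A),
          (μbar {y : Fin k → B.Path | (g : ↥B.fullGroup) • y = y}).toReal)
        / (Nat.card ↥(B.GcircN n A) : ℝ))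
      = fun n => ∫ y, phiFn B n A y ∂μbar := funext fun n => avg_eq_integral B n A μbar
  constructor
  · rw [hAvg, ← measureReal_def, ← integral_indicator_one hT]
    refine tendsto_integral_of_dominated_convergence (fun _ => (1:ℝ))
      (fun n => (phiFn_integrable B n A μbar).aestronglyMeasurable)
      (integrable_const 1) (fun n => Filter.Eventually.of_forall fun y => ?_)
      (Filter.Eventually.of_forall fun y => ?_)
    · rw [Real.norm_eq_abs, abs_of_nonneg (phiFn_nonneg B n A y)]
      exact phiFn_le_one B n A y
    · by_cases hy : ∀ i, y i ∈ A
      · rw [Set.indicator_of_mem (show y ∈ {y : Fin k → B.Path | ∀ i, y i ∈ A} from hy)]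
        have : (fun n => phiFn B n A y) = fun _ => (1:ℝ) :=
          funext fun n => phiFn_eq_one_of_mem B n A y hy
        rw [this, Pi.one_apply]
        exact tendsto_const_nhds
      · rw [Set.indicator_of_notMem
          (show y ∉ {y : Fin k → B.Path | ∀ i, y i ∈ A} from hy)]
        push_neg at hy
        obtain ⟨i₀, hi₀⟩ := hy
        exact phiFn_tendsto_zero B heven A m hdet y i₀ hi₀
  · rw [hAvg]
    intro n n' h
    exact integral_mono (phiFn_integrable B n' A μbar) (phiFn_integrable B n A μbar)
      fun y => phiFn_antitone B A y h
end
end
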